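/- arXiv:2412.13622 — 3 statements merged into one kernel-verified Lean document; each statement's English description precedes it below -/
import Mathlib

section
/- For every instance I, if a subset S* ⊆ S with |S*| ≤ q satisfies non-wastefulness, maximal diversity, balanced representation, and justified envy-freeness, then S* = Ch*(I); that is, the greedy choice function is the unique choice function satisfying these four properties. -/
open Classical

/-- An instance `I = (S, q, ≻, T, τ, η)`: a finite set of students with a strict
total order (priority, modeled by a linear order where `s' < s` means `s ≻ s'`),
a positive capacity `q`, a finite set of types `T`, a type assignment `τ`, and
ranked quotas `η t j` for ranks `j ∈ {1,…,r}`. -/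
structure Inst where
  S : Type
  T : Type
  [fS : Fintype S]
  [dS : DecidableEq S]
  [lS : LinearOrder S]
  [fT : Fintype T]
  [dT : DecidableEq T]
  q : ℕ
  qpos : 0 < q
  r : ℕ
  τ : S → Finset T
  η : T → ℕ → ℕ

attribute [instance] Inst.fS Inst.dS Inst.lS Inst.fT Inst.dT

/-- `s ≻ s'` : student `s` has strictly higher priority than `s'`. -/
def Inst.prio (I : Inst) (s s' : I.S) : Prop := s' < s

/-- A (potential) reserved seat: a type (`none` = the general type `t₀`),
a rank, and an index. -/
abbrev SeatT (I : Inst) := Option I.T × ℕ × ℕ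

/-- The rank of a seat. -/
def seatRank (I : Inst) (v : SeatT I) : ℕ := v.2.1

/-- The type of a seat (`none` = general type `t₀`). -/
def seatType (I : Inst) (v : SeatT I) : Option I.T := v.1

/-- Seats actually present in the ranked reservation graph: for each type `t`, rank
`1 ≤ j ≤ r` and index `i < η t j` a seat, and `q` general seats of rank `r`. -/
def SeatValid (I : Inst) (v : SeatT I) : Prop :=
  match v.1 with
  | some t => 1 ≤ v.2.1 ∧ v.2.1 ≤ I.r ∧ v.2.2 < I.η t v.2.1
  | none => v.2.1 = I.r ∧ v.2.2 < I.q

/-- There is an edge between student `s` and a seat of type `t` iff `t ∈ τ s` or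
`t` is the general type `t₀`. -/
def EdgeOK (I : Inst) (s : I.S) (v : SeatT I) : Prop :=
  match v.1 with
  | some t => t ∈ I.τ s
  | none => True

/-- A matching in the ranked reservation graph: a set of edges of `G` in which
every student and every seat appears at most once. -/
def IsMatching (I : Inst) (M : Finset (I.S × SeatT I)) : Prop :=
  (∀ e ∈ M, SeatValid I e.2 ∧ EdgeOK I e.1 e.2) ∧
  (∀ e ∈ M, ∀ e' ∈ M, e.1 = e'.1 → e = e') ∧
  (∀ e ∈ M, ∀ e' ∈ M, e.2 = e'.2 → e = e')

/-- `S_M`: the set of students covered by the matching `M`. -/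
def covered (I : Inst) (M : Finset (I.S × SeatT I)) : Finset I.S := M.image Prod.fst

/-- `x_i`: the number of edges of rank `i` in `M` (the `i`-th entry of the
signature `ρ(M)`). -/
def sig (I : Inst) (M : Finset (I.S × SeatT I)) (i : ℕ) : ℕ :=
  (M.filter (fun e => seatRank I e.2 = i)).card

/-- `ρ(M) <lex ρ(M')` : the signature of `M'` is lexicographically strictly
better than that of `M`. -/
def SigLT (I : Inst) (M M' : Finset (I.S × SeatT I)) : Prop :=
  ∃ k, 1 ≤ k ∧ k ≤ I.r ∧ (∀ i, 1 ≤ i → i < k → sig I M i = sig I M' i) ∧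
    sig I M k < sig I M' k

/-- A matching of size at most `q` is rank-maximal if its signature is
lexicographically ≥ that of every matching of size at most `q`. -/
def RankMaximal (I : Inst) (M : Finset (I.S × SeatT I)) : Prop :=
  IsMatching I M ∧ M.card ≤ I.q ∧
    ∀ M', IsMatching I M' → M'.card ≤ I.q → ¬ SigLT I M M'

/-- `U`: the set of groups (type combinations actually occurring among students). -/
def groups (I : Inst) : Finset (Finset I.T) := Finset.univ.image I.τ

/-- `S_u`: the set of students of group `u`. -/
def Su (I : Inst) (u : Finset I.T) : Finset I.S :=
  Finset.univ.filter (fun s => I.τ s = u)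

/-- `|M_u|`: the number of students of group `u` covered by `M`. -/
def Mu (I : Inst) (M : Finset (I.S × SeatT I)) (u : Finset I.T) : ℕ :=
  ((covered I M).filter (fun s => I.τ s = u)).card

/-- `min_{u ∈ U} |M_u| / |S_u|` (as `WithTop ℚ`; it is `⊤` iff `U = ∅`). -/
noncomputable def minRatio (I : Inst) (M : Finset (I.S × SeatT I)) : WithTop ℚ :=
  ((groups I).image (fun u => ((Mu I M u : ℚ) / ((Su I u).card : ℚ)))).min

/-- `M` attains balanced representation: `M` is rank-maximal of size at most `q`
and maximizes `min_{u∈U} |M_u|/|S_u|` over all such matchings. -/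
def BalancedRep (I : Inst) (M : Finset (I.S × SeatT I)) : Prop :=
  RankMaximal I M ∧ ∀ M', RankMaximal I M' → minRatio I M' ≤ minRatio I M

/-- The greedy choice function `Ch*`: process the students in decreasing order of
priority, adding the current student `s` whenever some matching of size at most `q`
that is rank-maximal and attains balanced representation covers `S* ∪ {s}`. -/
noncomputable def ChStar (I : Inst) : Finset I.S :=
  ((Finset.sort (Finset.univ : Finset I.S) (· ≤ ·)).reverse).foldl
    (fun A s =>
      if ∃ M, BalancedRep I M ∧ insert s A ⊆ covered I M then insert s A else A) ∅

/-- Non-wastefulness of a chosen set: `|S*| = min (|S|, q)`. -/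
def NonWasteful (I : Inst) (A : Finset I.S) : Prop :=
  A.card = min (Fintype.card I.S) I.q

/-- Maximal diversity of a chosen set: some rank-maximal matching of size at most
`q` covers only students of `S*`. -/
def MaxDiversity (I : Inst) (A : Finset I.S) : Prop :=
  ∃ M, RankMaximal I M ∧ covered I M ⊆ A

/-- Balanced representation of a chosen set: some matching in `𝕄` attaining
balanced representation covers all of `S*`. -/
def BalancedRepSet (I : Inst) (A : Finset I.S) : Prop :=
  ∃ M, BalancedRep I M ∧ A ⊆ covered I M

/-- Justified envy-freeness: no `s ∉ S*`, `s' ∈ S*` with `s ≻ s'` such that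
`(S* ∪ {s}) \ {s'}` satisfies both maximal diversity and balanced representation. -/
def JEF (I : Inst) (A : Finset I.S) : Prop :=
  ¬ ∃ s s', s ∉ A ∧ s' ∈ A ∧ I.prio s s' ∧
    MaxDiversity I (insert s A \ {s'}) ∧ BalancedRepSet I (insert s A \ {s'})

/-- `I` is valid w.r.t. a target vector `δ`: some rank-maximal matching of size at
most `q` has `|M_u| ≥ δ_u` for every group `u ∈ U`. -/
def ValidWrt (I : Inst) (δ : Finset I.T → ℕ) : Prop :=
  ∃ M, RankMaximal I M ∧ ∀ u ∈ groups I, δ u ≤ Mu I M u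

/-- The max-min ratio `α(I)`: the maximum over rank-maximal matchings `M` of
size at most `q` of `min_{u∈U} |M_u|/|S_u|`. -/
noncomputable def alphaQ (I : Inst) : ℚ :=
  let cands : Finset ℚ :=
    ((Finset.Icc 0 (Fintype.card I.S)) ×ˢ groups I).image
      (fun p => (p.1 : ℚ) / ((Su I p.2).card : ℚ))
  ((cands.filter
      (fun x : ℚ => ∃ M, RankMaximal I M ∧ minRatio I M = (x : WithTop ℚ))).max).unbotD 0

/-- The crucial vector `δ*` : `δ*_u = ⌊α(I)·|S_u|⌋`. -/
noncomputable def deltaStar (I : Inst) (u : Finset I.T) : ℕ :=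
  ⌊alphaQ I * ((Su I u).card : ℚ)⌋₊

/-- The `k` highest-priority students of `A`. -/
def topK (I : Inst) (A : Finset I.S) (k : ℕ) : Finset I.S :=
  A.filter (fun s => (A.filter (fun s' => s ≤ s')).card ≤ k)

/-! ### The flow network -/

/-- Nodes of the flow network: `Sum.inl 0` = source `a`, `Sum.inl 1` = sink `b`,
`Sum.inl 2` = the capacity node `Q`; group nodes, type nodes (`none` = `t₀`),
and rank nodes `t^i` (rank value `i+1` for `i : Fin r`). -/
abbrev Node (I : Inst) := Fin 3 ⊕ Finset I.T ⊕ Option I.T ⊕ (Option I.T × Fin I.r)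

def nSrc (I : Inst) : Node I := Sum.inl 0
def nSink (I : Inst) : Node I := Sum.inl 1
def nQ (I : Inst) : Node I := Sum.inl 2
def nGrp (I : Inst) (u : Finset I.T) : Node I := Sum.inr (Sum.inl u)
def nTyp (I : Inst) (t : Option I.T) : Node I := Sum.inr (Sum.inr (Sum.inl t))
def nRnk (I : Inst) (t : Option I.T) (i : Fin I.r) : Node I :=
  Sum.inr (Sum.inr (Sum.inr (t, i)))

/-- Quotas including the general type: `η_{t₀}^r = q` and `η_{t₀}^j = 0` for `j < r`. -/
def ηgen (I : Inst) (t : Option I.T) (j : ℕ) : ℕ :=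
  match t with
  | some t => I.η t j
  | none => if j = I.r then I.q else 0

/-- Capacities of the flow network (capacity `0` = no edge). -/
def cap (I : Inst) : Node I → Node I → ℕ := fun x y =>
  match x, y with
  | Sum.inl a, Sum.inl b => if a = 2 ∧ b = 1 then I.q else 0
  | Sum.inl a, Sum.inr (Sum.inl u) => if a = 0 then (Su I u).card else 0
  | Sum.inr (Sum.inl u), Sum.inr (Sum.inr (Sum.inl (some t))) =>
      ((Su I u).filter (fun s => t ∈ I.τ s)).card
  | Sum.inr (Sum.inl u), Sum.inr (Sum.inr (Sum.inl none)) => (Su I u).card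
  | Sum.inr (Sum.inr (Sum.inl t)), Sum.inr (Sum.inr (Sum.inr (t', i))) =>
      if t = t' then ηgen I t' ((i : ℕ) + 1) else 0
  | Sum.inr (Sum.inr (Sum.inr (t, i))), Sum.inl a =>
      if a = 2 then ηgen I t ((i : ℕ) + 1) else 0
  | _, _ => 0

/-- Costs of the flow network: the edge `t → t^i` has cost equal to the rank
`i+1`; all other edges have cost `0`. -/
def cost (I : Inst) : Node I → Node I → ℕ := fun x y =>
  match x, y with
  | Sum.inr (Sum.inr (Sum.inl t)), Sum.inr (Sum.inr (Sum.inr (t', i))) =>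
      if t = t' then (i : ℕ) + 1 else 0
  | _, _ => 0

/-- A flow: nonnegative, within capacities, and conserved at every node other
than the source and the sink. -/
def IsFlow (I : Inst) (f : Node I → Node I → ℝ) : Prop :=
  (∀ x y, 0 ≤ f x y) ∧ (∀ x y, f x y ≤ (cap I x y : ℝ)) ∧
  (∀ x : Node I, x ≠ nSrc I → x ≠ nSink I → (∑ y, f y x) = ∑ y, f x y)

/-- The value of a flow: `Σ_u f(a, u)`. -/
noncomputable def flowVal (I : Inst) (f : Node I → Node I → ℝ) : ℝ :=
  ∑ u : Finset I.T, f (nSrc I) (nGrp I u)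

/-- The cost of a flow: `Σ_e cost(e) · f(e)`. -/
noncomputable def flowCost (I : Inst) (f : Node I → Node I → ℝ) : ℝ :=
  ∑ x : Node I, ∑ y : Node I, (cost I x y : ℝ) * f x y

/-- A maximum flow. -/
def IsMaxFlow (I : Inst) (f : Node I → Node I → ℝ) : Prop :=
  IsFlow I f ∧ ∀ g, IsFlow I g → flowVal I g ≤ flowVal I f

/-- A minimum-cost maximum flow. -/
def IsMinCostMaxFlow (I : Inst) (f : Node I → Node I → ℝ) : Prop :=
  IsMaxFlow I f ∧ ∀ g, IsMaxFlow I g → flowCost I f ≤ flowCost I g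

/-- The flow `f_M` induced by a matching `M`. -/
noncomputable def inducedFlow (I : Inst) (M : Finset (I.S × SeatT I)) :
    Node I → Node I → ℝ := fun x y =>
  match x, y with
  | Sum.inl a, Sum.inl b => if a = 2 ∧ b = 1 then (M.card : ℝ) else 0
  | Sum.inl a, Sum.inr (Sum.inl u) => if a = 0 then (Mu I M u : ℝ) else 0
  | Sum.inr (Sum.inl u), Sum.inr (Sum.inr (Sum.inl t)) =>
      ((M.filter (fun e => I.τ e.1 = u ∧ seatType I e.2 = t)).card : ℝ)
  | Sum.inr (Sum.inr (Sum.inl t)), Sum.inr (Sum.inr (Sum.inr (t', i))) =>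
      if t = t' then
        ((M.filter (fun e => seatType I e.2 = t ∧ seatRank I e.2 = (i : ℕ) + 1)).card : ℝ)
      else 0
  | Sum.inr (Sum.inr (Sum.inr (t, i))), Sum.inl a =>
      if a = 2 then
        ((M.filter (fun e => seatType I e.2 = t ∧ seatRank I e.2 = (i : ℕ) + 1)).card : ℝ)
      else 0
  | _, _ => 0

/-! ### Alternating and augmenting paths -/

/-- The edge set of a path encoded by its list of students `a₀,…` and list of
seats `v₀,…` (edges `(aₖ, vₖ)` and `(aₖ₊₁, vₖ)`). -/
def edgesOf (I : Inst) (students : List I.S) (seats : List (SeatT I)) :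
    Finset (I.S × SeatT I) :=
  (students.zip seats).toFinset ∪ (students.tail.zip seats).toFinset

/-- Symmetric difference `M ⊕ P = (M \ P) ∪ (P \ M)`. -/
def symmDiffM (I : Inst) (M P : Finset (I.S × SeatT I)) : Finset (I.S × SeatT I) :=
  (M \ P) ∪ (P \ M)

/-- An alternating path w.r.t. `M` from an uncovered student to a covered student:
students `a₀, …, aₙ` and seats `v₀, …, vₙ₋₁`, with `(aₖ, vₖ) ∉ M` edges of `G`
and `(aₖ₊₁, vₖ) ∈ M`. -/
structure AltPath (I : Inst) (M : Finset (I.S × SeatT I)) where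
  students : List I.S
  seats : List (SeatT I)
  len : students.length = seats.length + 1
  nodupS : students.Nodup
  nodupV : seats.Nodup
  notM : ∀ e ∈ students.zip seats, e ∉ M ∧ SeatValid I e.2 ∧ EdgeOK I e.1 e.2
  inM : ∀ e ∈ students.tail.zip seats, e ∈ M

/-- The edge set of an alternating path. -/
def AltPath.edges {I : Inst} {M : Finset (I.S × SeatT I)} (P : AltPath I M) :
    Finset (I.S × SeatT I) :=
  edgesOf I P.students P.seats

/-- An augmenting path w.r.t. `M` from an uncovered student to an uncovered seat:
students `a₀, …, aₙ` and seats `v₀, …, vₙ`, with `(aₖ, vₖ) ∉ M` edges of `G`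
and `(aₖ₊₁, vₖ) ∈ M`. -/
structure AugPath (I : Inst) (M : Finset (I.S × SeatT I)) where
  students : List I.S
  seats : List (SeatT I)
  len : students.length = seats.length
  nodupS : students.Nodup
  nodupV : seats.Nodup
  notM : ∀ e ∈ students.zip seats, e ∉ M ∧ SeatValid I e.2 ∧ EdgeOK I e.1 e.2
  inM : ∀ e ∈ students.tail.zip seats, e ∈ M

/-- The edge set of an augmenting path. -/
def AugPath.edges {I : Inst} {M : Finset (I.S × SeatT I)} (P : AugPath I M) :
    Finset (I.S × SeatT I) :=
  edgesOf I P.students P.seats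

/-- The instance obtained from `I` by restricting the student set to `X`. -/
@[reducible] def restrict (I : Inst) (X : Finset I.S) : Inst :=
  { S := {s : I.S // s ∈ X}
    T := I.T
    fS := inferInstance
    dS := inferInstance
    lS := inferInstance
    fT := I.fT
    dT := I.dT
    q := I.q
    qpos := I.qpos
    r := I.r
    τ := fun s => I.τ s.1
    η := I.η }

/-! ### Auxiliary lemmas for the uniqueness theorem -/

namespace ChAux

variable {I : Inst}

lemma mem_covered {M : Finset (I.S × SeatT I)} {x : I.S} :
    x ∈ covered I M ↔ ∃ v, (x, v) ∈ M := by
  constructor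
  · intro hx
    obtain ⟨⟨a, v⟩, he, rfl⟩ := Finset.mem_image.1 hx
    exact ⟨v, he⟩
  · rintro ⟨v, hv⟩
    exact Finset.mem_image.2 ⟨(x, v), hv, rfl⟩

lemma fst_ne_of_not_covered {M : Finset (I.S × SeatT I)} {b : I.S}
    (hb : b ∉ covered I M) : ∀ e ∈ M, e.1 ≠ b := by
  rintro ⟨x, v⟩ he rfl
  exact hb (mem_covered.2 ⟨v, he⟩)

lemma card_covered {M : Finset (I.S × SeatT I)} (hM : IsMatching I M) :
    (covered I M).card = M.card := by
  apply Finset.card_image_of_injOn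
  intro e he e' he' h
  exact hM.2.1 e he e' he' h

lemma covered_erase {M : Finset (I.S × SeatT I)} {a : I.S} {v : SeatT I}
    (hM : IsMatching I M) (hav : (a, v) ∈ M) :
    covered I (M.erase (a, v)) = (covered I M).erase a := by
  ext x
  rw [Finset.mem_erase, mem_covered, mem_covered]
  constructor
  · rintro ⟨u, hu⟩
    have hu' := Finset.mem_of_mem_erase hu
    refine ⟨?_, u, hu'⟩
    rintro rfl
    exact Finset.ne_of_mem_erase hu (hM.2.1 _ hu' _ hav rfl)
  · rintro ⟨hx, u, hu⟩
    refine ⟨u, Finset.mem_erase.2 ⟨?_, hu⟩⟩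
    intro h
    apply hx
    exact congrArg Prod.fst h

lemma sig_insert {M : Finset (I.S × SeatT I)} {e : I.S × SeatT I} (he : e ∉ M) (i : ℕ) :
    sig I (insert e M) i = sig I M i + if seatRank I e.2 = i then 1 else 0 := by
  unfold sig
  rw [Finset.filter_insert]
  split
  · rw [Finset.card_insert_of_notMem (fun h => he (Finset.mem_filter.1 h).1)]
  · omega

lemma sig_erase {M : Finset (I.S × SeatT I)} {e : I.S × SeatT I} (he : e ∈ M) (i : ℕ) :
    sig I M i = sig I (M.erase e) i + if seatRank I e.2 = i then 1 else 0 := by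
  conv_lhs => rw [← Finset.insert_erase he]
  rw [sig_insert (Finset.notMem_erase e M)]

lemma count_swap {C : Finset I.S} {a b : I.S} (ha : a ∈ C) (hb : b ∉ C)
    (p : I.S → Prop) [DecidablePred p] :
    ((insert b (C.erase a)).filter p).card + (if p a then 1 else 0)
      = (C.filter p).card + (if p b then 1 else 0) := by
  rw [Finset.filter_insert, Finset.filter_erase]
  by_cases hpb : p b <;> by_cases hpa : p a
  · have h1 : a ∈ C.filter p := Finset.mem_filter.2 ⟨ha, hpa⟩
    have h2 : b ∉ (C.filter p).erase a :=
      fun h => hb (Finset.mem_filter.1 (Finset.mem_of_mem_erase h)).1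
    rw [if_pos hpb, if_pos hpa, if_pos hpb, Finset.card_insert_of_notMem h2,
      Finset.card_erase_of_mem h1]
    have : 1 ≤ (C.filter p).card := Finset.card_pos.2 ⟨a, h1⟩
    omega
  · rw [if_pos hpb, if_neg hpa, if_pos hpb,
      Finset.erase_eq_of_notMem (fun h => hpa (Finset.mem_filter.1 h).2),
      Finset.card_insert_of_notMem (fun h => hb (Finset.mem_filter.1 h).1)]
  · have h1 : a ∈ C.filter p := Finset.mem_filter.2 ⟨ha, hpa⟩
    rw [if_neg hpb, if_pos hpa, if_neg hpb, Finset.card_erase_of_mem h1]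
    have : 1 ≤ (C.filter p).card := Finset.card_pos.2 ⟨a, h1⟩
    omega
  · rw [if_neg hpb, if_neg hpa, if_neg hpb,
      Finset.erase_eq_of_notMem (fun h => hpa (Finset.mem_filter.1 h).2)]

lemma edgeok_congr {a b : I.S} {w : SeatT I} (h : I.τ a = I.τ b)
    (he : EdgeOK I a w) : EdgeOK I b w := by
  unfold EdgeOK at *
  match hw : w.1 with
  | some t => rw [hw] at he; rw [← h]; exact he
  | none => trivial

/-! ### The swap lemma -/

section Swap

variable {M : Finset (I.S × SeatT I)} {a b : I.S} {v w : SeatT I}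

lemma swap_matching (hM : IsMatching I M) (hav : (a, v) ∈ M) (hb : b ∉ covered I M)
    (hval : SeatValid I w) (hedge : EdgeOK I b w)
    (hwf : ∀ e ∈ M, e.2 = w → e = (a, v)) :
    IsMatching I (insert (b, w) (M.erase (a, v))) := by
  have hbM := fst_ne_of_not_covered hb
  refine ⟨?_, ?_, ?_⟩
  · intro e he
    rcases Finset.mem_insert.1 he with rfl | he'
    · exact ⟨hval, hedge⟩
    · exact hM.1 e (Finset.mem_of_mem_erase he')
  · intro e he e' he' h1
    rcases Finset.mem_insert.1 he with rfl | he <;> rcases Finset.mem_insert.1 he' with rfl | he'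
    · rfl
    · exact absurd h1.symm (hbM e' (Finset.mem_of_mem_erase he'))
    · exact absurd h1 (hbM e (Finset.mem_of_mem_erase he))
    · exact hM.2.1 e (Finset.mem_of_mem_erase he) e' (Finset.mem_of_mem_erase he') h1
  · intro e he e' he' h2
    rcases Finset.mem_insert.1 he with rfl | he <;> rcases Finset.mem_insert.1 he' with rfl | he'
    · rfl
    · exact absurd (hwf e' (Finset.mem_of_mem_erase he') h2.symm)
        (Finset.ne_of_mem_erase he')
    · exact absurd (hwf e (Finset.mem_of_mem_erase he) h2)
        (Finset.ne_of_mem_erase he)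
    · exact hM.2.2 e (Finset.mem_of_mem_erase he) e' (Finset.mem_of_mem_erase he') h2

lemma swap_card (hav : (a, v) ∈ M) (hb : b ∉ covered I M) :
    (insert (b, w) (M.erase (a, v))).card = M.card := by
  have hbw : (b, w) ∉ M.erase (a, v) := by
    intro h
    exact fst_ne_of_not_covered hb _ (Finset.mem_of_mem_erase h) rfl
  rw [Finset.card_insert_of_notMem hbw, Finset.card_erase_of_mem hav]
  have : 1 ≤ M.card := Finset.card_pos.2 ⟨_, hav⟩
  omega

lemma swap_covered (hM : IsMatching I M) (hav : (a, v) ∈ M) :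
    covered I (insert (b, w) (M.erase (a, v))) = insert b ((covered I M).erase a) := by
  unfold covered
  rw [Finset.image_insert]
  have := covered_erase hM hav
  unfold covered at this
  rw [this]

lemma swap_sig (hav : (a, v) ∈ M) (hb : b ∉ covered I M)
    (hr : seatRank I w = seatRank I v) (i : ℕ) :
    sig I (insert (b, w) (M.erase (a, v))) i = sig I M i := by
  have hbw : (b, w) ∉ M.erase (a, v) := by
    intro h
    exact fst_ne_of_not_covered hb _ (Finset.mem_of_mem_erase h) rfl
  rw [sig_insert hbw, sig_erase hav i]
  simp only [hr]

lemma swap_mu (hM : IsMatching I M) (hav : (a, v) ∈ M) (hb : b ∉ covered I M)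
    (hab : I.τ b = I.τ a) (u : Finset I.T) :
    Mu I (insert (b, w) (M.erase (a, v))) u = Mu I M u := by
  unfold Mu
  rw [swap_covered hM hav]
  have ha : a ∈ covered I M := mem_covered.2 ⟨v, hav⟩
  have := count_swap ha hb (fun x => I.τ x = u)
  have hiff : (if I.τ a = u then 1 else 0) = (if I.τ b = u then 1 else 0) := by
    rw [hab]
  omega

end Swap

/-! ### Rank/sig basic facts -/

lemma seat_rank_le {v : SeatT I} (hv : SeatValid I v) : seatRank I v ≤ I.r := by
  unfold SeatValid at hv
  unfold seatRank
  match h : v.1 with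
  | some t => rw [h] at hv; exact hv.2.1
  | none => rw [h] at hv; omega

lemma seat_rank_pos {v : SeatT I} (hv : SeatValid I v) (hr : 0 < I.r) :
    1 ≤ seatRank I v := by
  unfold SeatValid at hv
  unfold seatRank
  match h : v.1 with
  | some t => rw [h] at hv; exact hv.1
  | none => rw [h] at hv; omega

lemma seat_rank_zero {v : SeatT I} (hv : SeatValid I v) (hr : I.r = 0) :
    seatRank I v = 0 := by
  unfold SeatValid at hv
  unfold seatRank
  match h : v.1 with
  | some t => rw [h] at hv; omega
  | none => rw [h] at hv; omega

lemma sig_high {M : Finset (I.S × SeatT I)} (hM : IsMatching I M) {i : ℕ}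
    (hi : I.r < i) : sig I M i = 0 := by
  unfold sig
  rw [Finset.card_eq_zero, Finset.filter_eq_empty_iff]
  intro e he h
  have := seat_rank_le (hM.1 e he).1
  omega

lemma sig_zero_of_rpos {M : Finset (I.S × SeatT I)} (hM : IsMatching I M)
    (hr : 0 < I.r) : sig I M 0 = 0 := by
  unfold sig
  rw [Finset.card_eq_zero, Finset.filter_eq_empty_iff]
  intro e he h
  have := seat_rank_pos (hM.1 e he).1 hr
  omega

lemma sig_zero_of_rzero {M : Finset (I.S × SeatT I)} (hM : IsMatching I M)
    (hr : I.r = 0) : sig I M 0 = M.card := by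
  unfold sig
  congr 1
  rw [Finset.filter_eq_self]
  intro e he
  exact seat_rank_zero (hM.1 e he).1 hr

lemma sig_eq_of_rm {M N : Finset (I.S × SeatT I)} (hM : RankMaximal I M)
    (hN : RankMaximal I N) (hc : M.card = N.card) : ∀ i, sig I M i = sig I N i := by
  rcases Nat.eq_zero_or_pos I.r with hr | hr
  · intro i
    rcases Nat.eq_zero_or_pos i with rfl | hi
    · rw [sig_zero_of_rzero hM.1 hr, sig_zero_of_rzero hN.1 hr, hc]
    · rw [sig_high hM.1 (by omega), sig_high hN.1 (by omega)]
  · by_contra hne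
    push_neg at hne
    have hP : ∃ j, 1 ≤ j ∧ j ≤ I.r ∧ sig I M j ≠ sig I N j := by
      obtain ⟨i, hi⟩ := hne
      rcases Nat.eq_zero_or_pos i with rfl | hi1
      · rw [sig_zero_of_rpos hM.1 hr, sig_zero_of_rpos hN.1 hr] at hi
        exact absurd rfl hi
      · rcases le_or_gt i I.r with hi2 | hi2
        · exact ⟨i, hi1, hi2, hi⟩
        · rw [sig_high hM.1 hi2, sig_high hN.1 hi2] at hi
          exact absurd rfl hi
    classical
    set k := Nat.find hP with hk
    obtain ⟨hk1, hk2, hk3⟩ := Nat.find_spec hP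
    have hpre : ∀ j, 1 ≤ j → j < k → sig I M j = sig I N j := by
      intro j hj1 hj2
      by_contra hne'
      exact Nat.find_min hP hj2 ⟨hj1, by omega, hne'⟩
    rcases lt_or_gt_of_ne hk3 with hlt | hlt
    · exact hM.2.2 N hN.1 hN.2.1 ⟨k, hk1, hk2, hpre, hlt⟩
    · exact hN.2.2 M hM.1 hM.2.1
        ⟨k, hk1, hk2, fun i h1 h2 => (hpre i h1 h2).symm, hlt⟩

lemma rankMax_transfer {N N' : Finset (I.S × SeatT I)} (hN : RankMaximal I N)
    (hN' : IsMatching I N') (hc : N'.card = N.card)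
    (hs : ∀ i, sig I N' i = sig I N i) : RankMaximal I N' := by
  refine ⟨hN', hc ▸ hN.2.1, fun M' hm hcard hlt => hN.2.2 M' hm hcard ?_⟩
  obtain ⟨k, h1, h2, h3, h4⟩ := hlt
  refine ⟨k, h1, h2, fun i hi1 hi2 => ?_, ?_⟩
  · rw [← hs i]; exact h3 i hi1 hi2
  · rw [← hs k]; exact h4

lemma minRatio_congr {N N' : Finset (I.S × SeatT I)}
    (h : ∀ u, Mu I N' u = Mu I N u) : minRatio I N' = minRatio I N := by
  unfold minRatio
  congr 1
  apply Finset.image_congr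
  intro u _
  simp only [h]

lemma su_card_pos {u : Finset I.T} (hu : u ∈ groups I) : 0 < (Su I u).card := by
  obtain ⟨x, _, hx⟩ := Finset.mem_image.1 hu
  exact Finset.card_pos.2 ⟨x, Finset.mem_filter.2 ⟨Finset.mem_univ x, hx⟩⟩

lemma ratio_mono {u : Finset I.T} (hu : u ∈ groups I) {m n : ℕ} (h : m ≤ n) :
    (m : ℚ) / ((Su I u).card : ℚ) ≤ (n : ℚ) / ((Su I u).card : ℚ) := by
  gcongr


lemma groups_mem (x : I.S) : I.τ x ∈ groups I :=
  Finset.mem_image.2 ⟨x, Finset.mem_univ x, rfl⟩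

end ChAux

namespace ChAux

variable {I : Inst}

/-! ### Extension to full size -/

lemma ext_step (hS : I.q ≤ Fintype.card I.S) {M : Finset (I.S × SeatT I)}
    (hBR : BalancedRep I M) (hlt : M.card < I.q) :
    ∃ M', BalancedRep I M' ∧ M'.card = M.card + 1 ∧ covered I M ⊆ covered I M' := by
  have hMm : IsMatching I M := hBR.1.1
  -- a free student
  have hcov : (covered I M).card < Fintype.card I.S := by
    rw [card_covered hMm]; omega
  have hxex : ∃ x, x ∉ covered I M := by
    by_contra h
    push_neg at h
    have : covered I M = Finset.univ := Finset.eq_univ_iff_forall.2 h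
    rw [this, Finset.card_univ] at hcov
    omega
  obtain ⟨x, hx⟩ := hxex
  -- a free general seat index
  set used := (M.filter (fun e => seatType I e.2 = none)).image (fun e => e.2.2.2) with hused_def
  have husedcard : used.card < I.q :=
    lt_of_le_of_lt (le_trans Finset.card_image_le (Finset.card_filter_le _ _)) hlt
  have hiex : ∃ i ∈ Finset.range I.q, i ∉ used := by
    by_contra h
    push_neg at h
    have hsub : Finset.range I.q ⊆ used := fun i hi => h i hi
    have := Finset.card_le_card hsub
    rw [Finset.card_range] at this
    omega
  obtain ⟨i, hiq, hi⟩ := hiex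
  set w : SeatT I := ((none : Option I.T), (I.r, i)) with hw_def
  have hwval : SeatValid I w := ⟨rfl, Finset.mem_range.1 hiq⟩
  have hwedge : EdgeOK I x w := trivial
  have hwfree : ∀ e ∈ M, e.2 ≠ w := by
    intro e he h
    apply hi
    rw [hused_def]
    refine Finset.mem_image.2 ⟨e, Finset.mem_filter.2 ⟨he, ?_⟩, ?_⟩
    · show e.2.1 = none
      rw [h]
    · rw [h]
  have hxw : (x, w) ∉ M := fun h => hx (mem_covered.2 ⟨w, h⟩)
  set M' := insert (x, w) M with hM'_def
  have hM'm : IsMatching I M' := by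
    refine ⟨?_, ?_, ?_⟩
    · intro e he
      rcases Finset.mem_insert.1 he with rfl | he'
      · exact ⟨hwval, hwedge⟩
      · exact hMm.1 e he'
    · intro e he e' he' h1
      rcases Finset.mem_insert.1 he with rfl | he <;>
        rcases Finset.mem_insert.1 he' with rfl | he'
      · rfl
      · exact absurd h1.symm (fst_ne_of_not_covered hx e' he')
      · exact absurd h1 (fst_ne_of_not_covered hx e he)
      · exact hMm.2.1 e he e' he' h1
    · intro e he e' he' h2
      rcases Finset.mem_insert.1 he with rfl | he <;>
        rcases Finset.mem_insert.1 he' with rfl | he'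
      · rfl
      · exact absurd h2.symm (hwfree e' he')
      · exact absurd h2 (hwfree e he)
      · exact hMm.2.2 e he e' he' h2
  have hM'card : M'.card = M.card + 1 := Finset.card_insert_of_notMem hxw
  have hrw : seatRank I w = I.r := rfl
  have hM'sig : ∀ j, sig I M' j = sig I M j + if I.r = j then 1 else 0 := by
    intro j
    rw [hM'_def, sig_insert hxw]
    rfl
  have hcovsub : covered I M ⊆ covered I M' := by
    intro y hy
    obtain ⟨vy, hvy⟩ := mem_covered.1 hy
    exact mem_covered.2 ⟨vy, Finset.mem_insert_of_mem hvy⟩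
  rcases Nat.eq_zero_or_pos I.r with hr | hr
  · -- r = 0 : M' is still rank-maximal and balanced
    have hM'rm : RankMaximal I M' := by
      refine ⟨hM'm, by omega, fun M'' _ _ hlt' => ?_⟩
      obtain ⟨k, h1, h2, _, _⟩ := hlt'
      omega
    have hmu : ∀ u, Mu I M u ≤ Mu I M' u := by
      intro u
      apply Finset.card_le_card
      intro y hy
      obtain ⟨hy1, hy2⟩ := Finset.mem_filter.1 hy
      exact Finset.mem_filter.2 ⟨hcovsub hy1, hy2⟩
    have hminle : minRatio I M ≤ minRatio I M' := by
      unfold minRatio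
      apply Finset.le_min
      intro b hb
      obtain ⟨u, hu, rfl⟩ := Finset.mem_image.1 hb
      refine le_trans (Finset.min_le (Finset.mem_image.2 ⟨u, hu, rfl⟩)) ?_
      exact_mod_cast ratio_mono (I := I) hu (hmu u)
    exact ⟨M', ⟨hM'rm, fun M'' hm => le_trans (hBR.2 M'' hm) hminle⟩, hM'card, hcovsub⟩
  · -- r ≥ 1 : impossible, M was not rank-maximal
    exfalso
    apply hBR.1.2.2 M' hM'm (by omega)
    refine ⟨I.r, hr, le_refl _, fun j hj1 hj2 => ?_, ?_⟩
    · rw [hM'sig j, if_neg (show ¬ I.r = j by omega)]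
      omega
    · rw [hM'sig I.r, if_pos rfl]
      omega

lemma normalize (hS : I.q ≤ Fintype.card I.S) :
    ∀ (d : ℕ) (M : Finset (I.S × SeatT I)), BalancedRep I M → I.q - M.card ≤ d →
    ∃ M', BalancedRep I M' ∧ M'.card = I.q ∧ covered I M ⊆ covered I M' := by
  intro d
  induction d with
  | zero =>
    intro M hBR hd
    have hle : M.card ≤ I.q := hBR.1.2.1
    exact ⟨M, hBR, by omega, Finset.Subset.refl _⟩
  | succ d IH =>
    intro M hBR hd
    rcases eq_or_lt_of_le hBR.1.2.1 with heq | hlt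
    · exact ⟨M, hBR, heq, Finset.Subset.refl _⟩
    · obtain ⟨M1, hBR1, hc1, hsub1⟩ := ext_step hS hBR hlt
      obtain ⟨M2, hBR2, hc2, hsub2⟩ := IH M1 hBR1 (by omega)
      exact ⟨M2, hBR2, hc2, Finset.Subset.trans hsub1 hsub2⟩

end ChAux

namespace ChAux

variable {I : Inst}

/-! ### The exchange lemma -/

lemma key : ∀ (μ : ℕ) (M N : Finset (I.S × SeatT I)),
    (M \ N).card + (N \ M).card ≤ μ →
    IsMatching I M → IsMatching I N → (∀ i, sig I M i = sig I N i) →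
    ∀ u0, Mu I N u0 < Mu I M u0 →
    ∃ u' N', u' ≠ u0 ∧ Mu I M u' < Mu I N u' ∧ IsMatching I N' ∧ N'.card = N.card ∧
      (∀ i, sig I N' i = sig I N i) ∧ Mu I N' u0 = Mu I N u0 + 1 ∧
      Mu I N' u' + 1 = Mu I N u' ∧ (∀ u, u ≠ u0 → u ≠ u' → Mu I N' u = Mu I N u) := by
  intro μ
  induction μ with
  | zero =>
    intro M N hμ hM hN hsig u0 hu0
    exfalso
    -- there is a student of group u0 covered by M and not by N
    have hsub : ¬ ((covered I M).filter (fun x => I.τ x = u0)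
        ⊆ (covered I N).filter (fun x => I.τ x = u0)) := by
      intro h
      exact absurd (Finset.card_le_card h) (not_le.2 hu0)
    obtain ⟨s0, hs0M, hs0N'⟩ := Finset.not_subset.1 hsub
    have hs0cov : s0 ∈ covered I M := (Finset.mem_filter.1 hs0M).1
    have hs0u0 : I.τ s0 = u0 := (Finset.mem_filter.1 hs0M).2
    have hs0N : s0 ∉ covered I N := fun h => hs0N' (Finset.mem_filter.2 ⟨h, hs0u0⟩)
    obtain ⟨v0, hv0⟩ := mem_covered.1 hs0cov
    have : (s0, v0) ∈ M \ N :=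
      Finset.mem_sdiff.2 ⟨hv0, fun h => hs0N (mem_covered.2 ⟨v0, h⟩)⟩
    have := Finset.card_pos.2 ⟨_, this⟩
    omega
  | succ μ IH =>
    intro M N hμ hM hN hsig u0 hu0
    have hsub : ¬ ((covered I M).filter (fun x => I.τ x = u0)
        ⊆ (covered I N).filter (fun x => I.τ x = u0)) := by
      intro h
      exact absurd (Finset.card_le_card h) (not_le.2 hu0)
    obtain ⟨s0, hs0M, hs0N'⟩ := Finset.not_subset.1 hsub
    have hs0cov : s0 ∈ covered I M := (Finset.mem_filter.1 hs0M).1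
    have hs0u0 : I.τ s0 = u0 := (Finset.mem_filter.1 hs0M).2
    have hs0N : s0 ∉ covered I N := fun h => hs0N' (Finset.mem_filter.2 ⟨h, hs0u0⟩)
    obtain ⟨v0, hv0⟩ := mem_covered.1 hs0cov
    have hv0valid : SeatValid I v0 := (hM.1 _ hv0).1
    have hv0edge : EdgeOK I s0 v0 := (hM.1 _ hv0).2
    have hs0v0MN : (s0, v0) ∈ M \ N :=
      Finset.mem_sdiff.2 ⟨hv0, fun h => hs0N (mem_covered.2 ⟨v0, h⟩)⟩
    -- choose the edge e1 = (a1, v1) of N to remove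
    have hmain : ∃ a1 v1, (a1, v1) ∈ N ∧ (a1, v1) ∉ M ∧
        seatRank I v1 = seatRank I v0 ∧ (∀ e ∈ N, e.2 = v0 → e = (a1, v1)) := by
      by_cases hcase : ∃ e ∈ N, e.2 = v0
      · obtain ⟨e1, he1, he1v⟩ := hcase
        obtain ⟨a1, v1⟩ := e1
        have hv1 : v1 = v0 := he1v
        refine ⟨a1, v1, he1, ?_, by rw [hv1], ?_⟩
        · intro h
          have heq := hM.2.2 _ h _ hv0 hv1
          have ha1s0 : a1 = s0 := congrArg Prod.fst heq
          apply hs0N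
          apply mem_covered.2 ⟨v1, ?_⟩
          rw [← ha1s0]
          exact he1
        · intro e he hev
          exact hN.2.2 e he _ he1 (hev.trans hv1.symm)
      · -- v0 is not used by N; pick any N-edge of the same rank outside M
        push_neg at hcase
        have hs0v0f : (s0, v0) ∈ M.filter (fun e => seatRank I e.2 = seatRank I v0) :=
          Finset.mem_filter.2 ⟨hv0, rfl⟩
        have hcnt : (N.filter (fun e => seatRank I e.2 = seatRank I v0)).card
            = (M.filter (fun e => seatRank I e.2 = seatRank I v0)).card :=
          (hsig (seatRank I v0)).symm
        have hnsub : ¬ (N.filter (fun e => seatRank I e.2 = seatRank I v0)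
            ⊆ M.filter (fun e => seatRank I e.2 = seatRank I v0)) := by
          intro h
          have heq := Finset.eq_of_subset_of_card_le h (le_of_eq hcnt.symm)
          rw [← heq] at hs0v0f
          exact hs0N (mem_covered.2 ⟨v0, (Finset.mem_filter.1 hs0v0f).1⟩)
        obtain ⟨e1, he1f, he1M'⟩ := Finset.not_subset.1 hnsub
        obtain ⟨he1N, he1rk⟩ := Finset.mem_filter.1 he1f
        obtain ⟨a1, v1⟩ := e1
        have he1M : (a1, v1) ∉ M := by
          intro h
          exact he1M' (Finset.mem_filter.2 ⟨h, he1rk⟩)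
        refine ⟨a1, v1, he1N, he1M, he1rk, ?_⟩
        intro e he hev
        exact absurd hev (hcase e he)
    obtain ⟨a1, v1, he1N, he1M, he1rk, hwf⟩ := hmain
    have ha1cov : a1 ∈ covered I N := mem_covered.2 ⟨v1, he1N⟩
    have ha1s0 : a1 ≠ s0 := fun h => hs0N (h ▸ ha1cov)
    set N1 := insert (s0, v0) (N.erase (a1, v1)) with hN1_def
    have hN1m : IsMatching I N1 := swap_matching hN he1N hs0N hv0valid hv0edge hwf
    have hN1card : N1.card = N.card := swap_card he1N hs0N
    have hN1sig : ∀ i, sig I N1 i = sig I N i := swap_sig he1N hs0N he1rk.symm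
    have hN1cov : covered I N1 = insert s0 ((covered I N).erase a1) :=
      swap_covered hN he1N
    -- counts
    have hcnt1 : ∀ u, Mu I N1 u + (if I.τ a1 = u then 1 else 0)
        = Mu I N u + (if I.τ s0 = u then 1 else 0) := by
      intro u
      have := count_swap (I := I) ha1cov hs0N (fun x => I.τ x = u)
      unfold Mu
      rw [hN1cov]
      exact this
    -- measure decrease
    have hmeas : (M \ N1).card + (N1 \ M).card + 2 ≤ (M \ N).card + (N \ M).card := by
      have hMN1 : M \ N1 = (M \ N).erase (s0, v0) := by
        ext e
        constructor
        · intro he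
          obtain ⟨heM, heN1⟩ := Finset.mem_sdiff.1 he
          have hne : e ≠ (s0, v0) := fun h => heN1 (by rw [h, hN1_def]; exact Finset.mem_insert_self _ _)
          refine Finset.mem_erase.2 ⟨hne, Finset.mem_sdiff.2 ⟨heM, fun heN => ?_⟩⟩
          have hnea : e ≠ (a1, v1) := fun h => he1M (h ▸ heM)
          exact heN1 (Finset.mem_insert_of_mem (Finset.mem_erase.2 ⟨hnea, heN⟩))
        · intro he
          obtain ⟨hne, he'⟩ := Finset.mem_erase.1 he
          obtain ⟨heM, heN⟩ := Finset.mem_sdiff.1 he'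
          refine Finset.mem_sdiff.2 ⟨heM, fun h => ?_⟩
          rcases Finset.mem_insert.1 h with h | h
          · exact hne h
          · exact heN (Finset.mem_of_mem_erase h)
      have hN1M : N1 \ M = (N \ M).erase (a1, v1) := by
        ext e
        constructor
        · intro he
          obtain ⟨heN1, heM⟩ := Finset.mem_sdiff.1 he
          rcases Finset.mem_insert.1 heN1 with rfl | h
          · exact absurd hv0 heM
          · exact Finset.mem_erase.2 ⟨Finset.ne_of_mem_erase h,
              Finset.mem_sdiff.2 ⟨Finset.mem_of_mem_erase h, heM⟩⟩
        · intro he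
          obtain ⟨hne, he'⟩ := Finset.mem_erase.1 he
          obtain ⟨heN, heM⟩ := Finset.mem_sdiff.1 he'
          exact Finset.mem_sdiff.2
            ⟨Finset.mem_insert_of_mem (Finset.mem_erase.2 ⟨hne, heN⟩), heM⟩
      have h1 : (s0, v0) ∈ M \ N := hs0v0MN
      have h2 : (a1, v1) ∈ N \ M := Finset.mem_sdiff.2 ⟨he1N, he1M⟩
      rw [hMN1, hN1M, Finset.card_erase_of_mem h1, Finset.card_erase_of_mem h2]
      have c1 := Finset.card_pos.2 ⟨_, h1⟩
      have c2 := Finset.card_pos.2 ⟨_, h2⟩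
      omega
    have hmeas' : (M \ N1).card + (N1 \ M).card ≤ μ := by omega
    have hsig1 : ∀ i, sig I M i = sig I N1 i := fun i => (hsig i).trans (hN1sig i).symm
    by_cases h11 : I.τ a1 = u0
    · -- same group: all counts unchanged
      have hcnteq : ∀ u, Mu I N1 u = Mu I N u := by
        intro u
        have ha := hcnt1 u
        have hb : (if I.τ a1 = u then 1 else 0) = (if I.τ s0 = u then 1 else 0) := by
          rw [h11, hs0u0]
        omega
      have hu0' : Mu I N1 u0 < Mu I M u0 := by
        rw [hcnteq u0]; exact hu0
      obtain ⟨u', N2, hne0, hlt', hm2, hc2, hs2, hb0, hb1, hoth⟩ :=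
        IH M N1 hmeas' hM hN1m hsig1 u0 hu0'
      refine ⟨u', N2, hne0, ?_, hm2, hc2.trans hN1card,
        fun i => (hs2 i).trans (hN1sig i), ?_, ?_, ?_⟩
      · rw [← hcnteq u']; exact hlt'
      · rw [hb0, hcnteq u0]
      · rw [hb1, hcnteq u']
      · intro u hu1 hu2
        rw [hoth u hu1 hu2, hcnteq u]
    · -- different group
      have hcA : Mu I N1 u0 = Mu I N u0 + 1 := by
        have h := hcnt1 u0
        rw [if_neg h11, if_pos hs0u0] at h
        omega
      have hcB : Mu I N1 (I.τ a1) + 1 = Mu I N (I.τ a1) := by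
        have h := hcnt1 (I.τ a1)
        rw [if_pos rfl, if_neg (show ¬ I.τ s0 = I.τ a1 from
          fun h' => h11 (h'.symm.trans hs0u0))] at h
        omega
      have hcC : ∀ u, u ≠ u0 → u ≠ I.τ a1 → Mu I N1 u = Mu I N u := by
        intro u hu1 hu2
        have h := hcnt1 u
        rw [if_neg (fun h' => hu2 h'.symm),
          if_neg (fun h' => hu1 (hs0u0.symm.trans h').symm)] at h
        omega
      by_cases h2 : Mu I M (I.τ a1) < Mu I N (I.τ a1)
      · exact ⟨I.τ a1, N1, h11, h2, hN1m, hN1card, hN1sig, hcA, hcB, hcC⟩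
      · push_neg at h2
        have hpivot : Mu I N1 (I.τ a1) < Mu I M (I.τ a1) := by omega
        obtain ⟨u2, N2, hne1, hlt2, hm2, hc2, hs2, hb0, hb1, hoth⟩ :=
          IH M N1 hmeas' hM hN1m hsig1 (I.τ a1) hpivot
        have hu2ne0 : u2 ≠ u0 := by
          intro h
          subst h
          rw [hcA] at hlt2
          omega
        have hN1u2 : Mu I N1 u2 = Mu I N u2 := hcC u2 hu2ne0 hne1
        refine ⟨u2, N2, hu2ne0, ?_, hm2, hc2.trans hN1card,
          fun i => (hs2 i).trans (hN1sig i), ?_, ?_, ?_⟩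
        · rw [← hN1u2]; exact hlt2
        · rw [hoth u0 (fun h => h11 h.symm) (fun h => hu2ne0 h.symm), hcA]
        · rw [hN1u2] at hb1
          exact hb1
        · intro u hu1 hu2
          by_cases hu3 : u = I.τ a1
          · subst hu3
            rw [hb0]
            omega
          · rw [hoth u hu3 hu2, hcC u hu1 hu3]

end ChAux

namespace ChAux

variable {I : Inst}

/-! ### Realizing a target covered set using twins -/

lemma card_fiberwise (Y : Finset I.S) :
    Y.card = ∑ u ∈ (Finset.univ : Finset (Finset I.T)),
      (Y.filter (fun x => I.τ x = u)).card :=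
  Finset.card_eq_sum_card_fiberwise (fun x _ => Finset.mem_univ _)

lemma twin : ∀ (k : ℕ) (N : Finset (I.S × SeatT I)) (X : Finset I.S),
    (X \ covered I N).card ≤ k → IsMatching I N →
    (∀ u, (X.filter (fun x => I.τ x = u)).card = Mu I N u) →
    ∃ N', IsMatching I N' ∧ N'.card = N.card ∧ (∀ i, sig I N' i = sig I N i) ∧
      covered I N' = X := by
  intro k
  induction k with
  | zero =>
    intro N X hk hN hcnt
    have hsub : X ⊆ covered I N := by
      intro x hx
      by_contra hx'
      have : x ∈ X \ covered I N := Finset.mem_sdiff.2 ⟨hx, hx'⟩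
      have := Finset.card_pos.2 ⟨x, this⟩
      omega
    have hcard : (covered I N).card ≤ X.card := by
      rw [card_fiberwise X, card_fiberwise (covered I N)]
      apply le_of_eq
      apply Finset.sum_congr rfl
      intro u _
      exact (hcnt u).symm
    exact ⟨N, hN, rfl, fun _ => rfl, (Finset.eq_of_subset_of_card_le hsub hcard).symm⟩
  | succ k IH =>
    intro N X hk hN hcnt
    by_cases hempty : (X \ covered I N).card = 0
    · exact IH N X (by omega) hN hcnt
    · have : ∃ b, b ∈ X \ covered I N := Finset.card_pos.1 (by omega)
      obtain ⟨b, hb⟩ := this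
      obtain ⟨hbX, hbC⟩ := Finset.mem_sdiff.1 hb
      set C := covered I N with hC_def
      -- find a ∈ C with the same group, not in X
      have hne : ¬ (C.filter (fun x => I.τ x = I.τ b) ⊆ X) := by
        intro hsub
        have h1 : C.filter (fun x => I.τ x = I.τ b) ⊆ X.filter (fun x => I.τ x = I.τ b) := by
          intro y hy
          exact Finset.mem_filter.2 ⟨hsub hy, (Finset.mem_filter.1 hy).2⟩
        have h2 := Finset.eq_of_subset_of_card_le h1 (le_of_eq (hcnt (I.τ b)))
        have : b ∈ C.filter (fun x => I.τ x = I.τ b) := by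
          rw [h2]
          exact Finset.mem_filter.2 ⟨hbX, rfl⟩
        exact hbC (Finset.mem_filter.1 this).1
      obtain ⟨a, haf, haX⟩ := Finset.not_subset.1 hne
      obtain ⟨haC, haτ⟩ := Finset.mem_filter.1 haf
      obtain ⟨va, hva⟩ := mem_covered.1 haC
      have hτba : I.τ b = I.τ a := haτ.symm
      -- swap a ↦ b
      set N1 := insert (b, va) (N.erase (a, va)) with hN1_def
      have hwf : ∀ e ∈ N, e.2 = va → e = (a, va) := fun e he hev =>
        hN.2.2 e he _ hva hev
      have hN1m : IsMatching I N1 :=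
        swap_matching hN hva hbC (hN.1 _ hva).1
          (edgeok_congr hτba.symm (hN.1 _ hva).2) hwf
      have hN1card : N1.card = N.card := swap_card hva hbC
      have hN1sig : ∀ i, sig I N1 i = sig I N i := swap_sig hva hbC rfl
      have hN1mu : ∀ u, Mu I N1 u = Mu I N u := swap_mu hN hva hbC hτba
      have hN1cov : covered I N1 = insert b (C.erase a) := swap_covered hN hva
      -- measure decreases
      have hdiff : X \ covered I N1 = (X \ C).erase b := by
        rw [hN1cov]
        ext x
        constructor
        · intro hx
          obtain ⟨hx1, hx2⟩ := Finset.mem_sdiff.1 hx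
          have hxb : x ≠ b := fun h => hx2 (by rw [h]; exact Finset.mem_insert_self _ _)
          refine Finset.mem_erase.2 ⟨hxb, Finset.mem_sdiff.2 ⟨hx1, fun hxC => ?_⟩⟩
          have hxa : x ≠ a := fun h => haX (h ▸ hx1)
          exact hx2 (Finset.mem_insert_of_mem (Finset.mem_erase.2 ⟨hxa, hxC⟩))
        · intro hx
          obtain ⟨hxb, hx'⟩ := Finset.mem_erase.1 hx
          obtain ⟨hx1, hx2⟩ := Finset.mem_sdiff.1 hx'
          refine Finset.mem_sdiff.2 ⟨hx1, fun h => ?_⟩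
          rcases Finset.mem_insert.1 h with h | h
          · exact hxb h
          · exact hx2 (Finset.mem_of_mem_erase h)
      have hmeas : (X \ covered I N1).card ≤ k := by
        rw [hdiff, Finset.card_erase_of_mem hb]
        omega
      obtain ⟨N2, hm2, hc2, hs2, hcov2⟩ := IH N1 X hmeas hN1m
        (fun u => (hcnt u).trans (hN1mu u).symm)
      exact ⟨N2, hm2, hc2.trans hN1card, fun i => (hs2 i).trans (hN1sig i), hcov2⟩

end ChAux

namespace ChAux

variable {I : Inst}

lemma le_minRatio {N : Finset (I.S × SeatT I)} {x : WithTop ℚ}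
    (h : ∀ u ∈ groups I, x ≤ (((Mu I N u : ℚ) / ((Su I u).card : ℚ) : ℚ) : WithTop ℚ)) :
    x ≤ minRatio I N := by
  unfold minRatio
  apply Finset.le_min
  intro b hb
  obtain ⟨u, hu, rfl⟩ := Finset.mem_image.1 hb
  exact h u hu

lemma minRatio_le {N : Finset (I.S × SeatT I)} {u : Finset I.T} (hu : u ∈ groups I) :
    minRatio I N ≤ (((Mu I N u : ℚ) / ((Su I u).card : ℚ) : ℚ) : WithTop ℚ) := by
  unfold minRatio
  exact Finset.min_le (Finset.mem_image.2 ⟨u, hu, rfl⟩)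

/-! ### The main rejection lemma -/

lemma main_reject (A : Finset I.S) (h3 : BalancedRepSet I A) (h4 : JEF I A)
    (hqS : I.q < Fintype.card I.S) (hA : A.card = I.q) (s : I.S) (hs : s ∉ A)
    (hex : ∃ M, BalancedRep I M ∧ insert s (A.filter (fun a => s < a)) ⊆ covered I M) :
    False := by
  obtain ⟨MA, hMA, hAsub⟩ := h3
  have hMAm : IsMatching I MA := hMA.1.1
  have hcovA : covered I MA = A := by
    have h1 : (covered I MA).card ≤ A.card := by
      rw [card_covered hMAm, hA]; exact hMA.1.2.1
    exact (Finset.eq_of_subset_of_card_le hAsub h1).symm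
  have hMAcard : MA.card = I.q := by
    rw [← card_covered hMAm, hcovA]; exact hA
  obtain ⟨M0, hM0, hM0cov⟩ := hex
  obtain ⟨M, hM, hMcard, hMcov'⟩ := normalize (le_of_lt hqS) (I.q - M0.card) M0 hM0 le_rfl
  have hMm : IsMatching I M := hM.1.1
  have hMcov : insert s (A.filter (fun a => s < a)) ⊆ covered I M :=
    Finset.Subset.trans hM0cov hMcov'
  have hDA : A.filter (fun a => s < a) ⊆ A := Finset.filter_subset _ _
  have hsD : s ∉ A.filter (fun a => s < a) := fun h => hs (hDA h)
  have hsMcov : s ∈ covered I M := hMcov (Finset.mem_insert_self _ _)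
  have hDcov : A.filter (fun a => s < a) ⊆ covered I M :=
    fun x hx => hMcov (Finset.mem_insert_of_mem hx)
  have hMuMA : ∀ u, Mu I MA u = (A.filter (fun x => I.τ x = u)).card := by
    intro u; unfold Mu; rw [hcovA]
  -- given a suitable matching, we can contradict justified envy-freeness
  have finisher : ∀ s', s' ∈ A → ¬ s < s' → ∀ N, RankMaximal I N → BalancedRep I N →
      covered I N = insert s A \ {s'} → False := by
    intro s' hs'A hs'nlt N hRM hBR hcov
    apply h4
    have hne : s' ≠ s := fun h => hs (by rw [← h]; exact hs'A)
    refine ⟨s, s', hs, hs'A, lt_of_le_of_ne (not_lt.1 hs'nlt) hne, ?_, ?_⟩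
    · exact ⟨N, hRM, by rw [hcov]⟩
    · exact ⟨N, hBR, by rw [hcov]⟩
  by_cases heasy : ∃ s', s' ∈ A ∧ ¬ s < s' ∧ I.τ s' = I.τ s
  · -- easy case: a twin of s with lower priority is in A
    obtain ⟨s', hs'A, hs'nlt, hτ⟩ := heasy
    have hss' : s ≠ s' := fun h => hs (by rw [h]; exact hs'A)
    have hs'cov : s' ∈ covered I MA := by rw [hcovA]; exact hs'A
    obtain ⟨v, hv⟩ := mem_covered.1 hs'cov
    have hsMA : s ∉ covered I MA := by rw [hcovA]; exact hs
    have hwf : ∀ e ∈ MA, e.2 = v → e = (s', v) := fun e he hev => hMAm.2.2 e he _ hv hev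
    have hNm : IsMatching I (insert (s, v) (MA.erase (s', v))) :=
      swap_matching hMAm hv hsMA (hMAm.1 _ hv).1 (edgeok_congr hτ (hMAm.1 _ hv).2) hwf
    have hNcard : (insert (s, v) (MA.erase (s', v))).card = MA.card := swap_card hv hsMA
    have hNsig : ∀ i, sig I (insert (s, v) (MA.erase (s', v))) i = sig I MA i :=
      swap_sig hv hsMA rfl
    have hNmu : ∀ u, Mu I (insert (s, v) (MA.erase (s', v))) u = Mu I MA u :=
      swap_mu hMAm hv hsMA hτ.symm
    have hB : insert s A \ {s'} = insert s (A.erase s') := by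
      rw [Finset.sdiff_singleton_eq_erase, Finset.erase_insert_of_ne hss']
    have hNcov : covered I (insert (s, v) (MA.erase (s', v))) = insert s A \ {s'} := by
      rw [swap_covered hMAm hv, hcovA, hB]
    have hRM : RankMaximal I (insert (s, v) (MA.erase (s', v))) :=
      rankMax_transfer hMA.1 hNm hNcard hNsig
    have hBR : BalancedRep I (insert (s, v) (MA.erase (s', v))) :=
      ⟨hRM, fun M'' hm => le_trans (hMA.2 M'' hm) (le_of_eq (minRatio_congr hNmu).symm)⟩
    exact finisher s' hs'A hs'nlt _ hRM hBR hNcov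
  · -- hard case
    push_neg at heasy
    have hAfil : A.filter (fun x => I.τ x = I.τ s) ⊆ A.filter (fun a => s < a) := by
      intro a ha
      obtain ⟨haA, haτ⟩ := Finset.mem_filter.1 ha
      refine Finset.mem_filter.2 ⟨haA, ?_⟩
      by_contra hlt
      exact heasy a haA (not_lt.1 hlt) haτ
    have hcnt0 : Mu I MA (I.τ s) < Mu I M (I.τ s) := by
      have h1 : Mu I MA (I.τ s) ≤
          ((A.filter (fun a => s < a)).filter (fun x => I.τ x = I.τ s)).card := by
        rw [hMuMA]
        apply Finset.card_le_card
        intro a ha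
        exact Finset.mem_filter.2 ⟨hAfil ha, (Finset.mem_filter.1 ha).2⟩
      have h2 : insert s ((A.filter (fun a => s < a)).filter (fun x => I.τ x = I.τ s)) ⊆
          (covered I M).filter (fun x => I.τ x = I.τ s) := by
        intro x hx
        rcases Finset.mem_insert.1 hx with rfl | hx
        · exact Finset.mem_filter.2 ⟨hsMcov, rfl⟩
        · exact Finset.mem_filter.2
            ⟨hDcov (Finset.mem_filter.1 hx).1, (Finset.mem_filter.1 hx).2⟩
      have h3 := Finset.card_le_card h2
      rw [Finset.card_insert_of_notMem (fun h => hsD (Finset.mem_filter.1 h).1)] at h3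
      have h3' : ((A.filter (fun a => s < a)).filter (fun x => I.τ x = I.τ s)).card + 1
          ≤ Mu I M (I.τ s) := h3
      omega
    have hsigMMA : ∀ i, sig I M i = sig I MA i :=
      sig_eq_of_rm hM.1 hMA.1 (by rw [hMcard, hMAcard])
    obtain ⟨u', N', hne0, hlt', hN'm, hN'card, hN'sig, hb0, hb1, hoth⟩ :=
      key ((M \ MA).card + (MA \ M).card) M MA le_rfl hMm hMAm hsigMMA (I.τ s) hcnt0
    -- find s' of group u' in A, below s
    have hs'ex : ∃ s' ∈ A.filter (fun x => I.τ x = u'), s' ∉ A.filter (fun a => s < a) := by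
      apply Finset.not_subset.1
      intro hsub
      have h1 : A.filter (fun x => I.τ x = u') ⊆ (covered I M).filter (fun x => I.τ x = u') := by
        intro a ha
        exact Finset.mem_filter.2 ⟨hDcov (hsub ha), (Finset.mem_filter.1 ha).2⟩
      have h2 : (A.filter (fun x => I.τ x = u')).card ≤ Mu I M u' := Finset.card_le_card h1
      rw [← hMuMA u'] at h2
      omega
    obtain ⟨s', hs'f, hs'D⟩ := hs'ex
    obtain ⟨hs'A, hs'τ⟩ := Finset.mem_filter.1 hs'f
    have hs'nlt : ¬ s < s' := fun h => hs'D (Finset.mem_filter.2 ⟨hs'A, h⟩)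
    have hss' : s ≠ s' := fun h => hs (by rw [h]; exact hs'A)
    have hB : insert s A \ {s'} = insert s (A.erase s') := by
      rw [Finset.sdiff_singleton_eq_erase, Finset.erase_insert_of_ne hss']
    have hu'grp : u' ∈ groups I := by rw [← hs'τ]; exact groups_mem s'
    have hu0grp : I.τ s ∈ groups I := groups_mem s
    -- counts of the target set B
    have hcounts : ∀ u, ((insert s (A.erase s')).filter (fun x => I.τ x = u)).card
        = Mu I N' u := by
      intro u
      by_cases hu : u = I.τ s
      · subst hu
        rw [Finset.filter_insert, if_pos rfl, Finset.filter_erase,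
          Finset.erase_eq_of_notMem (show s' ∉ A.filter (fun x => I.τ x = I.τ s) from
            fun h => hne0 (hs'τ.symm.trans (Finset.mem_filter.1 h).2)),
          Finset.card_insert_of_notMem (show s ∉ A.filter (fun x => I.τ x = I.τ s) from
            fun h => hs (Finset.mem_filter.1 h).1),
          ← hMuMA, hb0]
      · by_cases hu' : u = u'
        · subst hu'
          rw [Finset.filter_insert, if_neg (fun h => hne0 h.symm), Finset.filter_erase,
            Finset.card_erase_of_mem (Finset.mem_filter.2 ⟨hs'A, hs'τ⟩)]
          have hMA' : (A.filter (fun x => I.τ x = u)).card = Mu I MA u := (hMuMA u).symm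
          omega
        · rw [Finset.filter_insert, if_neg (fun h => hu h.symm), Finset.filter_erase,
            Finset.erase_eq_of_notMem (show s' ∉ A.filter (fun x => I.τ x = u) from
              fun h => hu' ((hs'τ.symm.trans (Finset.mem_filter.1 h).2)).symm),
            ← hMuMA, hoth u hu hu']
    obtain ⟨N2, hm2, hc2, hs2, hcov2⟩ :=
      twin ((insert s (A.erase s') \ covered I N').card) N' (insert s (A.erase s'))
        le_rfl hN'm hcounts
    have hRM2 : RankMaximal I N2 :=
      rankMax_transfer hMA.1 hm2 (hc2.trans hN'card) (fun i => (hs2 i).trans (hN'sig i))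
    have hN2mu : ∀ u, Mu I N2 u = Mu I N' u := by
      intro u
      unfold Mu
      rw [hcov2]
      exact hcounts u
    have hMAM : minRatio I MA = minRatio I M :=
      le_antisymm (hM.2 MA hMA.1) (hMA.2 M hM.1)
    have hminle : minRatio I MA ≤ minRatio I N2 := by
      apply le_minRatio
      intro u hu
      by_cases hueq : u = u'
      · subst hueq
        have h1 : Mu I M u ≤ Mu I N2 u := by
          rw [hN2mu]
          omega
        calc minRatio I MA = minRatio I M := hMAM
          _ ≤ _ := minRatio_le hu
          _ ≤ _ := WithTop.coe_le_coe.2 (ratio_mono hu h1)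
      · by_cases hueq0 : u = I.τ s
        · subst hueq0
          have h1 : Mu I MA (I.τ s) ≤ Mu I N2 (I.τ s) := by
            rw [hN2mu]
            omega
          calc minRatio I MA ≤ _ := minRatio_le hu
            _ ≤ _ := WithTop.coe_le_coe.2 (ratio_mono hu h1)
        · have h1 : Mu I N2 u = Mu I MA u := (hN2mu u).trans (hoth u hueq0 hueq)
          calc minRatio I MA ≤ _ := minRatio_le hu
            _ = _ := by rw [h1]
    have hBR2 : BalancedRep I N2 := ⟨hRM2, fun M'' hm => le_trans (hMA.2 M'' hm) hminle⟩
    exact finisher s' hs'A hs'nlt N2 hRM2 hBR2 (by rw [hcov2]; exact hB.symm)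

end ChAux

namespace ChAux

variable {I : Inst}

/-! ### The greedy fold -/

lemma fold_eq (A : Finset I.S)
    (hpos : ∀ s ∈ A, ∃ M, BalancedRep I M ∧
      insert s (A.filter (fun a => s < a)) ⊆ covered I M)
    (hneg : ∀ s ∉ A, ¬ ∃ M, BalancedRep I M ∧
      insert s (A.filter (fun a => s < a)) ⊆ covered I M) :
    ∀ L : List I.S, L.Pairwise (fun a b => b < a) →
      (∀ x ∈ L, ∀ y, y ≤ x → y ∈ L) →
      List.foldl (fun B s =>
        if ∃ M, BalancedRep I M ∧ insert s B ⊆ covered I M then insert s B else B)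
        (A \ L.toFinset) L = A := by
  intro L
  induction L with
  | nil => intro _ _; simp
  | cons s L' IH =>
    intro hsort hcl
    have hhead : ∀ y ∈ L', y < s := fun y hy => (List.pairwise_cons.1 hsort).1 y hy
    have hsort' : L'.Pairwise (fun a b => b < a) := (List.pairwise_cons.1 hsort).2
    have hcl' : ∀ x ∈ L', ∀ y, y ≤ x → y ∈ L' := by
      intro x hx y hy
      have hyL : y ∈ s :: L' := hcl x (List.mem_cons_of_mem s hx) y hy
      rcases List.mem_cons.1 hyL with rfl | h
      · exact absurd (lt_of_le_of_lt hy (hhead x hx)) (lt_irrefl y)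
      · exact h
    have hacc : A \ (s :: L').toFinset = A.filter (fun a => s < a) := by
      ext a
      simp only [Finset.mem_sdiff, Finset.mem_filter, List.mem_toFinset]
      constructor
      · rintro ⟨haA, haL⟩
        refine ⟨haA, ?_⟩
        rcases lt_or_ge s a with h | h
        · exact h
        · exact absurd (hcl s (List.mem_cons_self (a := s) (l := L')) a h) haL
      · rintro ⟨haA, hlt⟩
        refine ⟨haA, fun hmem => ?_⟩
        rcases List.mem_cons.1 hmem with rfl | h
        · exact lt_irrefl a hlt
        · exact absurd (hhead a h) (not_lt.2 (le_of_lt hlt))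
    rw [List.foldl_cons, hacc]
    by_cases hsA : s ∈ A
    · rw [if_pos (hpos s hsA)]
      have hstep : insert s (A.filter (fun a => s < a)) = A \ L'.toFinset := by
        ext a
        simp only [Finset.mem_insert, Finset.mem_filter, Finset.mem_sdiff, List.mem_toFinset]
        constructor
        · rintro (h | ⟨haA, hlt⟩)
          · refine ⟨by rw [h]; exact hsA, fun hmem => ?_⟩
            rw [h] at hmem
            exact absurd (hhead s hmem) (lt_irrefl s)
          · exact ⟨haA, fun h => absurd (hhead a h) (not_lt.2 (le_of_lt hlt))⟩
        · rintro ⟨haA, haL⟩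
          by_cases has : a = s
          · exact Or.inl has
          · refine Or.inr ⟨haA, ?_⟩
            rcases lt_or_ge s a with h | h
            · exact h
            · have hmem := hcl s (List.mem_cons_self (a := s) (l := L')) a h
              rcases List.mem_cons.1 hmem with h' | h'
              · exact absurd h' has
              · exact absurd h' haL
      rw [hstep]
      exact IH hsort' hcl'
    · rw [if_neg (hneg s hsA)]
      have hstep : A.filter (fun a => s < a) = A \ L'.toFinset := by
        ext a
        simp only [Finset.mem_filter, Finset.mem_sdiff, List.mem_toFinset]
        constructor
        · rintro ⟨haA, hlt⟩
          exact ⟨haA, fun h => absurd (hhead a h) (not_lt.2 (le_of_lt hlt))⟩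
        · rintro ⟨haA, haL⟩
          refine ⟨haA, ?_⟩
          have has : a ≠ s := fun h => hsA (h ▸ haA)
          rcases lt_or_ge s a with h | h
          · exact h
          · have hmem := hcl s (List.mem_cons_self (a := s) (l := L')) a h
            rcases List.mem_cons.1 hmem with h' | h'
            · exact absurd h' has
            · exact absurd h' haL
      rw [hstep]
      exact IH hsort' hcl'

end ChAux

/-- any subset `S* ⊆ S` with `|S*| ≤ q` satisfying non-wastefulness,
maximal diversity, balanced representation and justified envy-freeness equals
`Ch*(I)`; i.e. `Ch*` is the unique choice function with these four properties. -/
theorem chStar_unique (I : Inst) (A : Finset I.S) (hq : A.card ≤ I.q)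
    (h1 : NonWasteful I A) (h2 : MaxDiversity I A)
    (h3 : BalancedRepSet I A) (h4 : JEF I A) :
    A = ChStar I := by
  classical
  have hpos : ∀ s ∈ A, ∃ M, BalancedRep I M ∧
      insert s (A.filter (fun a => s < a)) ⊆ covered I M := by
    intro s hsA
    obtain ⟨MA, hMA, hAsub⟩ := h3
    refine ⟨MA, hMA, Finset.Subset.trans ?_ hAsub⟩
    intro x hx
    rcases Finset.mem_insert.1 hx with rfl | hx
    · exact hsA
    · exact (Finset.filter_subset _ _) hx
  have hneg : ∀ s ∉ A, ¬ ∃ M, BalancedRep I M ∧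
      insert s (A.filter (fun a => s < a)) ⊆ covered I M := by
    intro s hsA hex
    rcases le_or_gt (Fintype.card I.S) I.q with hle | hlt
    · have hAcard : A.card = Fintype.card I.S := by
        unfold NonWasteful at h1
        rw [min_eq_left hle] at h1
        exact h1
      have hA : A = Finset.univ := (Finset.card_eq_iff_eq_univ A).1 hAcard
      rw [hA] at hsA
      exact hsA (Finset.mem_univ s)
    · have hAq : A.card = I.q := by
        unfold NonWasteful at h1
        rw [min_eq_right (le_of_lt hlt)] at h1
        exact h1
      exact ChAux.main_reject A h3 h4 hlt hAq s hsA hex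
  have hsort : ((Finset.sort (Finset.univ : Finset I.S) (· ≤ ·)).reverse).Pairwise
      (fun a b => b < a) :=
    List.pairwise_reverse.2 (Finset.sortedLT_sort _).pairwise
  have hcl : ∀ x ∈ (Finset.sort (Finset.univ : Finset I.S) (· ≤ ·)).reverse,
      ∀ y, y ≤ x → y ∈ (Finset.sort (Finset.univ : Finset I.S) (· ≤ ·)).reverse := by
    intro x _ y _
    rw [List.mem_reverse]
    exact (Finset.mem_sort _).2 (Finset.mem_univ y)
  have hLuniv : ((Finset.sort (Finset.univ : Finset I.S) (· ≤ ·)).reverse).toFinset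
      = Finset.univ := by
    ext x
    simp [Finset.mem_sort]
  have h0 : (∅ : Finset I.S)
      = A \ ((Finset.sort (Finset.univ : Finset I.S) (· ≤ ·)).reverse).toFinset := by
    rw [hLuniv]
    exact (by simp : (A \ (Finset.univ : Finset I.S)) = ∅).symm
  unfold ChStar
  rw [h0]
  exact (ChAux.fold_eq A hpos hneg _ hsort hcl).symm
end

section
/- Let M be a matching in the ranked reservation graph G, let s be a student not covered by M, and let P be an alternating path with respect to M that starts at s and ends at a student s' covered by M (the edges of P lie alternately outside and inside M, beginning with an edge not in M and ending with an edge of M). Then M ⊕ P := (M \ P) ∪ (P \ M) is a matching in G with |M ⊕ P| = |M|, ρ(M ⊕ P) = ρ(M), and the set of students covered by M ⊕ P equals (S_M ∪ {s}) \ {s'}. In particular, if M is rank-maximal of size at most q, so is M ⊕ P. -/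
open Classical

lemma zip_mem_iff' {α β : Type*} (l₁ : List α) (l₂ : List β) (p : α × β) :
    p ∈ l₁.zip l₂ ↔ ∃ i : ℕ, ∃ h₁ : i < l₁.length, ∃ h₂ : i < l₂.length,
      p = (l₁[i], l₂[i]) := by
  constructor
  · intro h
    obtain ⟨i, hi, hp⟩ := List.mem_iff_getElem.mp h
    have hi' : i < min l₁.length l₂.length := by simpa [List.length_zip] using hi
    refine ⟨i, lt_of_lt_of_le hi' (min_le_left _ _), lt_of_lt_of_le hi' (min_le_right _ _), ?_⟩
    rw [← hp, List.getElem_zip]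
  · rintro ⟨i, h₁, h₂, rfl⟩
    have h : i < (l₁.zip l₂).length := by simp [List.length_zip]; omega
    rw [← List.getElem_zip (h := h)]
    exact List.getElem_mem _

/-- flipping an alternating path from an uncovered student `s` to a
covered student `s'` yields a matching `M ⊕ P` of the same size and signature,
covering `(S_M ∪ {s}) \ {s'}`; in particular rank-maximality is preserved. -/
theorem altPath_flip (I : Inst) (M : Finset (I.S × SeatT I)) (hM : IsMatching I M)
    (P : AltPath I M) (s s' : I.S)
    (hhead : P.students.head? = some s) (hlast : P.students.getLast? = some s')
    (hne : P.seats ≠ [])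
    (hs : s ∉ covered I M) (hs' : s' ∈ covered I M) :
    IsMatching I (symmDiffM I M P.edges) ∧
    (symmDiffM I M P.edges).card = M.card ∧
    (∀ i, sig I (symmDiffM I M P.edges) i = sig I M i) ∧
    covered I (symmDiffM I M P.edges) = insert s (covered I M) \ {s'} ∧
    (RankMaximal I M → RankMaximal I (symmDiffM I M P.edges)) := by
  classical
  obtain ⟨L, V, hlen0, hnodS, hnodV, hnotM, hinM⟩ := P
  simp only [AltPath.edges]
  dsimp only at hhead hlast hne
  obtain ⟨n, hVlen⟩ : ∃ n, V.length = n := ⟨_, rfl⟩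
  have hlen : L.length = n + 1 := by rw [hlen0, hVlen]
  have hnpos : 1 ≤ n := by
    have := List.length_pos_iff.mpr hne; omega
  obtain ⟨A, hA⟩ : ∃ A : Finset (I.S × SeatT I), A = (L.zip V).toFinset := ⟨_, rfl⟩
  obtain ⟨B, hB⟩ : ∃ B : Finset (I.S × SeatT I), B = (L.tail.zip V).toFinset := ⟨_, rfl⟩
  have hPE : edgesOf I L V = A ∪ B := by rw [hA, hB]; rfl
  -- membership characterizations
  have memA : ∀ e, e ∈ A ↔ ∃ i, ∃ h : i < n, e = (L[i]'(by omega), V[i]'(by omega)) := by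
    intro e
    rw [hA, List.mem_toFinset, zip_mem_iff']
    constructor
    · rintro ⟨i, h1, h2, rfl⟩; exact ⟨i, by omega, rfl⟩
    · rintro ⟨i, h, rfl⟩; exact ⟨i, by omega, by omega, rfl⟩
  have memB : ∀ e, e ∈ B ↔ ∃ i, ∃ h : i < n, e = (L[i+1]'(by omega), V[i]'(by omega)) := by
    intro e
    rw [hB, List.mem_toFinset, zip_mem_iff']
    constructor
    · rintro ⟨i, h1, h2, rfl⟩
      refine ⟨i, by omega, ?_⟩
      rw [List.getElem_tail]
    · rintro ⟨i, h, rfl⟩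
      have h1 : i < L.tail.length := by rw [List.length_tail]; omega
      exact ⟨i, h1, by omega, by rw [List.getElem_tail]⟩
  have hAnotM : ∀ e ∈ A, e ∉ M := fun e he => (hnotM e (List.mem_toFinset.mp (hA ▸ he))).1
  have hAok : ∀ e ∈ A, SeatValid I e.2 ∧ EdgeOK I e.1 e.2 :=
    fun e he => (hnotM e (List.mem_toFinset.mp (hA ▸ he))).2
  have hBM : ∀ e ∈ B, e ∈ M := fun e he => hinM e (List.mem_toFinset.mp (hB ▸ he))
  have hBsub : B ⊆ M := fun e he => hBM e he
  -- endpoints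
  have hLne : L ≠ [] := by intro h; rw [h] at hlen; simp at hlen
  have hL0 : L[0]'(by omega) = s := by
    rw [List.head?_eq_head hLne, List.head_eq_getElem] at hhead
    exact Option.some_injective _ hhead
  have hLn : L[n]'(by omega) = s' := by
    rw [List.getLast?_eq_getLast hLne, List.getLast_eq_getElem] at hlast
    have := Option.some_injective _ hlast
    simpa only [hlen, Nat.add_sub_cancel] using this
  -- key uniqueness facts
  have key : ∀ e ∈ M, ∀ j, ∀ _hj : j < n, e.1 = L[j+1]'(by omega) → e ∈ B := by
    intro e he j hj h1
    have hB' : (L[j+1]'(by omega), V[j]'(by omega)) ∈ B := (memB _).mpr ⟨j, hj, rfl⟩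
    have := hM.2.1 e he _ (hBM _ hB') h1
    rw [this]; exact hB'
  have keyv : ∀ e ∈ M, ∀ j, ∀ _hj : j < n, e.2 = V[j]'(by omega) → e ∈ B := by
    intro e he j hj h1
    have hB' : (L[j+1]'(by omega), V[j]'(by omega)) ∈ B := (memB _).mpr ⟨j, hj, rfl⟩
    have := hM.2.2 e he _ (hBM _ hB') h1
    rw [this]; exact hB'
  -- the symmetric difference
  have hM'eq : symmDiffM I M (edgesOf I L V) = (M \ B) ∪ A := by
    ext e
    simp only [symmDiffM, hPE, Finset.mem_union, Finset.mem_sdiff]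
    have h1 := hAnotM e
    have h2 := hBM e
    constructor
    · rintro (⟨heM, hnab⟩ | ⟨hab, hnM⟩)
      · exact Or.inl ⟨heM, fun h => hnab (Or.inr h)⟩
      · rcases hab with h | h
        · exact Or.inr h
        · exact absurd (h2 h) hnM
    · rintro (⟨heM, hnB⟩ | hA')
      · by_cases heA : e ∈ A
        · exact absurd heM (h1 heA)
        · exact Or.inl ⟨heM, fun h => by rcases h with h | h <;> [exact heA h; exact hnB h]⟩
      · exact Or.inr ⟨Or.inl hA', h1 hA'⟩
  rw [hM'eq]
  have hdisj : Disjoint (M \ B) A := by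
    rw [Finset.disjoint_left]
    intro e he heA
    exact hAnotM e heA (Finset.mem_sdiff.mp he).1
  -- matching property
  have hmatch : IsMatching I ((M \ B) ∪ A) := by
    refine ⟨?_, ?_, ?_⟩
    · intro e he
      rcases Finset.mem_union.mp he with he | he
      · exact hM.1 e (Finset.mem_sdiff.mp he).1
      · exact hAok e he
    · intro e he e' he' h12
      rcases Finset.mem_union.mp he with he | he <;>
        rcases Finset.mem_union.mp he' with he' | he'
      · exact hM.2.1 e (Finset.mem_sdiff.mp he).1 e' (Finset.mem_sdiff.mp he').1 h12
      · exfalso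
        obtain ⟨i, hi, rfl⟩ := (memA e').mp he'
        rcases Nat.eq_zero_or_pos i with rfl | hipos
        · exact hs (Finset.mem_image.mpr ⟨e, (Finset.mem_sdiff.mp he).1, by
            rw [h12, hL0]⟩)
        · obtain ⟨j, rfl⟩ : ∃ j, i = j + 1 := ⟨i - 1, by omega⟩
          exact (Finset.mem_sdiff.mp he).2
            (key e (Finset.mem_sdiff.mp he).1 j (by omega) h12)
      · exfalso
        obtain ⟨i, hi, rfl⟩ := (memA e).mp he
        rcases Nat.eq_zero_or_pos i with rfl | hipos
        · exact hs (Finset.mem_image.mpr ⟨e', (Finset.mem_sdiff.mp he').1, by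
            rw [← h12, hL0]⟩)
        · obtain ⟨j, rfl⟩ : ∃ j, i = j + 1 := ⟨i - 1, by omega⟩
          exact (Finset.mem_sdiff.mp he').2
            (key e' (Finset.mem_sdiff.mp he').1 j (by omega) h12.symm)
      · obtain ⟨i, hi, rfl⟩ := (memA e).mp he
        obtain ⟨j, hj, rfl⟩ := (memA e').mp he'
        have : i = j := (hnodS.getElem_inj_iff).mp h12
        subst this; rfl
    · intro e he e' he' h12
      rcases Finset.mem_union.mp he with he | he <;>
        rcases Finset.mem_union.mp he' with he' | he'
      · exact hM.2.2 e (Finset.mem_sdiff.mp he).1 e' (Finset.mem_sdiff.mp he').1 h12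
      · exfalso
        obtain ⟨j, hj, rfl⟩ := (memA e').mp he'
        exact (Finset.mem_sdiff.mp he).2
          (keyv e (Finset.mem_sdiff.mp he).1 j hj h12)
      · exfalso
        obtain ⟨j, hj, rfl⟩ := (memA e).mp he
        exact (Finset.mem_sdiff.mp he').2
          (keyv e' (Finset.mem_sdiff.mp he').1 j hj h12.symm)
      · obtain ⟨i, hi, rfl⟩ := (memA e).mp he
        obtain ⟨j, hj, rfl⟩ := (memA e').mp he'
        have : i = j := (hnodV.getElem_inj_iff).mp h12
        subst this; rfl
  -- cardinalities
  have hAnodup : (L.zip V).Nodup := by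
    refine List.Nodup.of_map Prod.snd ?_
    rw [List.map_snd_zip (by omega)]
    exact hnodV
  have hBnodup : (L.tail.zip V).Nodup := by
    refine List.Nodup.of_map Prod.snd ?_
    rw [List.map_snd_zip (by rw [List.length_tail]; omega)]
    exact hnodV
  have hcardA : A.card = n := by
    rw [hA, List.toFinset_card_of_nodup hAnodup, List.length_zip]
    omega
  have hcardB : B.card = n := by
    rw [hB, List.toFinset_card_of_nodup hBnodup, List.length_zip, List.length_tail]
    omega
  have hBcardle : B.card ≤ M.card := Finset.card_le_card hBsub
  have hcard : ((M \ B) ∪ A).card = M.card := by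
    rw [Finset.card_union_of_disjoint hdisj, Finset.card_sdiff_of_subset hBsub, hcardA, hcardB]
    omega
  -- signature
  have hsig : ∀ i, sig I ((M \ B) ∪ A) i = sig I M i := by
    intro i
    set p : I.S × SeatT I → Prop := fun e => seatRank I e.2 = i with hp
    have hAB : (A.filter p).card = (B.filter p).card := by
      have hinjA : Set.InjOn Prod.snd ((A.filter p : Finset _) : Set (I.S × SeatT I)) := by
        intro e he e' he' h12
        obtain ⟨k, hk, rfl⟩ := (memA e).mp (Finset.mem_filter.mp he).1
        obtain ⟨k', hk', rfl⟩ := (memA e').mp (Finset.mem_filter.mp he').1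
        have : k = k' := (hnodV.getElem_inj_iff).mp h12
        subst this; rfl
      have hinjB : Set.InjOn Prod.snd ((B.filter p : Finset _) : Set (I.S × SeatT I)) := by
        intro e he e' he' h12
        obtain ⟨k, hk, rfl⟩ := (memB e).mp (Finset.mem_filter.mp he).1
        obtain ⟨k', hk', rfl⟩ := (memB e').mp (Finset.mem_filter.mp he').1
        have : k = k' := (hnodV.getElem_inj_iff).mp h12
        subst this; rfl
      have himg : (A.filter p).image Prod.snd = (B.filter p).image Prod.snd := by
        ext v
        simp only [Finset.mem_image, Finset.mem_filter]
        constructor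
        · rintro ⟨e, ⟨heA, hpe⟩, rfl⟩
          obtain ⟨k, hk, rfl⟩ := (memA e).mp heA
          exact ⟨(L[k+1]'(by omega), V[k]'(by omega)), ⟨(memB _).mpr ⟨k, hk, rfl⟩, hpe⟩, rfl⟩
        · rintro ⟨e, ⟨heB, hpe⟩, rfl⟩
          obtain ⟨k, hk, rfl⟩ := (memB e).mp heB
          exact ⟨(L[k]'(by omega), V[k]'(by omega)), ⟨(memA _).mpr ⟨k, hk, rfl⟩, hpe⟩, rfl⟩
      calc (A.filter p).card = ((A.filter p).image Prod.snd).card :=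
              (Finset.card_image_of_injOn hinjA).symm
        _ = ((B.filter p).image Prod.snd).card := by rw [himg]
        _ = (B.filter p).card := Finset.card_image_of_injOn hinjB
    have hsdiff : (M \ B).filter p = (M.filter p) \ (B.filter p) := by
      ext e
      simp only [Finset.mem_filter, Finset.mem_sdiff]
      tauto
    have hsub : B.filter p ⊆ M.filter p := Finset.filter_subset_filter p hBsub
    have hle : (B.filter p).card ≤ (M.filter p).card := Finset.card_le_card hsub
    show (((M \ B) ∪ A).filter (fun e => seatRank I e.2 = i)).card = _
    rw [Finset.filter_union,
      Finset.card_union_of_disjoint (Finset.disjoint_filter_filter hdisj),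
      hsdiff, Finset.card_sdiff_of_subset hsub]
    show _ - _ + (A.filter p).card = (M.filter p).card
    rw [hAB]
    omega
  -- covered students
  have hcovj : ∀ j, ∀ _hj : j < n, L[j+1]'(by omega) ∈ covered I M := by
    intro j hj
    exact Finset.mem_image.mpr ⟨(L[j+1]'(by omega), V[j]'(by omega)),
      hBM _ ((memB _).mpr ⟨j, hj, rfl⟩), rfl⟩
  have hss' : s ≠ s' := by
    rw [← hL0, ← hLn]
    intro h
    have : (0 : ℕ) = n := (hnodS.getElem_inj_iff).mp h
    omega
  have hcov : covered I ((M \ B) ∪ A) = insert s (covered I M) \ {s'} := by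
    ext x
    rw [Finset.mem_sdiff, Finset.mem_insert, Finset.mem_singleton]
    constructor
    · intro hx
      obtain ⟨e, he, rfl⟩ := Finset.mem_image.mp hx
      rcases Finset.mem_union.mp he with he | he
      · obtain ⟨heM, heB⟩ := Finset.mem_sdiff.mp he
        refine ⟨Or.inr (Finset.mem_image.mpr ⟨e, heM, rfl⟩), ?_⟩
        intro hx'
        obtain ⟨j, rfl⟩ : ∃ j, n = j + 1 := ⟨n - 1, by omega⟩
        exact heB (key e heM j (by omega) (by rw [hx', ← hLn]))
      · obtain ⟨i, hi, rfl⟩ := (memA e).mp he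
        rcases Nat.eq_zero_or_pos i with rfl | hipos
        · exact ⟨Or.inl hL0, by show L[0]'(by omega) ≠ s'; rw [hL0]; exact hss'⟩
        · obtain ⟨j, rfl⟩ : ∃ j, i = j + 1 := ⟨i - 1, by omega⟩
          refine ⟨Or.inr (hcovj j (by omega)), ?_⟩
          show L[j+1]'(by omega) ≠ s'
          rw [← hLn]
          intro h
          have : j + 1 = n := (hnodS.getElem_inj_iff).mp h
          omega
    · rintro ⟨hx | hxC, hxs'⟩
      · subst hx
        exact Finset.mem_image.mpr ⟨(L[0]'(by omega), V[0]'(by omega)),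
          Finset.mem_union.mpr (Or.inr ((memA _).mpr ⟨0, by omega, rfl⟩)), hL0⟩
      · obtain ⟨e, heM, rfl⟩ := Finset.mem_image.mp hxC
        by_cases heB : e ∈ B
        · obtain ⟨j, hj, rfl⟩ := (memB e).mp heB
          have hjn : j + 1 < n := by
            rcases Nat.lt_or_ge (j+1) n with h | h
            · exact h
            · exfalso
              have hjne : j + 1 = n := by omega
              apply hxs'
              show L[j+1]'(by omega) = s'
              subst hjne
              exact hLn
          exact Finset.mem_image.mpr ⟨(L[j+1]'(by omega), V[j+1]'(by omega)),
            Finset.mem_union.mpr (Or.inr ((memA _).mpr ⟨j+1, hjn, rfl⟩)), rfl⟩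
        · exact Finset.mem_image.mpr
            ⟨e, Finset.mem_union.mpr (Or.inl (Finset.mem_sdiff.mpr ⟨heM, heB⟩)), rfl⟩
  refine ⟨hmatch, hcard, hsig, hcov, ?_⟩
  rintro ⟨_, hqle, hmax⟩
  refine ⟨hmatch, by rw [hcard]; exact hqle, ?_⟩
  intro M'' hM'' hq'' hlt
  apply hmax M'' hM'' hq''
  obtain ⟨k, h1, h2, h3, h4⟩ := hlt
  exact ⟨k, h1, h2, fun i hi1 hi2 => by rw [← hsig i]; exact h3 i hi1 hi2,
    by rw [← hsig k]; exact h4⟩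
end

section
/- Let M be a matching in the ranked reservation graph G, let s be a student not covered by M, let P be an augmenting path with respect to M that starts at s and ends at a seat v of rank k not covered by M, and let s' be a student covered by M, not lying on P, who is matched in M to a seat v' of rank k. Then M* := ((M \ P) ∪ (P \ M)) \ {(s', v')} is a matching in G with |M*| = |M|, ρ(M*) = ρ(M), and the set of students covered by M* equals (S_M ∪ {s}) \ {s'}. In particular, if M is rank-maximal of size at most q, so is M*. -/
open Classical

private lemma card_filter_toFinset' {α} [DecidableEq α] (l : List α) (hnd : l.Nodup)
    (p : α → Prop) [DecidablePred p] :
    (l.toFinset.filter p).card = l.countP (fun a => decide (p a)) := by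
  rw [List.countP_eq_length_filter,
    ← List.toFinset_card_of_nodup (hnd.filter (fun a => decide (p a))),
    List.toFinset_filter]
  congr 1
  exact Finset.filter_congr (fun x _ => by simp)

set_option maxHeartbeats 1000000 in
/-- flipping an augmenting path from an uncovered student `s` to an
uncovered seat `v` of rank `k` and removing an `M`-edge `(s', v')` of rank `k`
(with `s'` covered and not on the path) yields a matching `M*` of the same size
and signature covering `(S_M ∪ {s}) \ {s'}`; rank-maximality is preserved. -/
theorem augPath_flip (I : Inst) (M : Finset (I.S × SeatT I)) (hM : IsMatching I M)
    (P : AugPath I M) (s s' : I.S) (v v' : SeatT I) (k : ℕ)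
    (hPne : P.students ≠ [])
    (hhead : P.students.head? = some s) (hs : s ∉ covered I M)
    (hlast : P.seats.getLast? = some v) (hv : ∀ e ∈ M, e.2 ≠ v)
    (hrk : seatRank I v = k)
    (hs'cov : s' ∈ covered I M) (hs'P : s' ∉ P.students)
    (hs'v' : (s', v') ∈ M) (hrk' : seatRank I v' = k) :
    IsMatching I (symmDiffM I M P.edges \ {(s', v')}) ∧
    (symmDiffM I M P.edges \ {(s', v')}).card = M.card ∧
    (∀ i, sig I (symmDiffM I M P.edges \ {(s', v')}) i = sig I M i) ∧
    covered I (symmDiffM I M P.edges \ {(s', v')}) = insert s (covered I M) \ {s'} ∧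
    (RankMaximal I M → RankMaximal I (symmDiffM I M P.edges \ {(s', v')})) := by
    classical
  obtain ⟨hMval, hMfst, hMsnd⟩ := hM
  have hlen := P.len
  have hnS := P.nodupS
  have hnV := P.nodupV
  have hnotM := P.notM
  have hinM := P.inM
  set as := P.students with has_def
  set vs := P.seats with hvs_def
  have hedges : P.edges = (as.zip vs).toFinset ∪ (as.tail.zip vs).toFinset := rfl
  rw [hedges]
  set A : Finset (I.S × SeatT I) := (as.zip vs).toFinset with hA_def
  set B : Finset (I.S × SeatT I) := (as.tail.zip vs).toFinset with hB_def
  set C : Finset (I.S × SeatT I) := insert (s', v') B with hC_def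
  have hpos : 0 < as.length := List.length_pos_iff.2 hPne
  have hvne : vs ≠ [] := by
    intro h
    have h0 : as.length = 0 := by rw [hlen, h, List.length_nil]
    omega
  have hvpos : 0 < vs.length := hlen ▸ hpos
  have hsv : s = as.head hPne := by
    rw [List.head?_eq_head hPne] at hhead
    exact (Option.some_inj.1 hhead).symm
  have hs0 : as[0]'hpos = s := by rw [hsv, List.head_eq_getElem]
  have hvlast : vs[vs.length - 1]'(by omega) = v := by
    rw [List.getLast?_eq_getLast hvne] at hlast
    rw [← Option.some_inj.1 hlast, List.getLast_eq_getElem]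
  have hmemA : ∀ e : I.S × SeatT I, e ∈ A ↔
      ∃ i, ∃ (h1 : i < as.length) (h2 : i < vs.length), e = (as[i], vs[i]) := by
    intro e
    rw [hA_def, List.mem_toFinset, List.mem_iff_getElem]
    constructor
    · rintro ⟨i, h, he⟩
      rw [List.length_zip] at h
      refine ⟨i, lt_of_lt_of_le h (min_le_left _ _), lt_of_lt_of_le h (min_le_right _ _), ?_⟩
      rw [← he, List.getElem_zip]
    · rintro ⟨i, h1, h2, he⟩
      refine ⟨i, by rw [List.length_zip]; omega, ?_⟩
      rw [List.getElem_zip, he]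
  have hmemB : ∀ e : I.S × SeatT I, e ∈ B ↔
      ∃ i, ∃ (h1 : i + 1 < as.length), e = (as[i+1], vs[i]'(by omega)) := by
    intro e
    rw [hB_def, List.mem_toFinset, List.mem_iff_getElem]
    constructor
    · rintro ⟨i, h, he⟩
      have hlt := h
      rw [List.length_zip, List.length_tail] at hlt
      have h1 : i + 1 < as.length := by omega
      refine ⟨i, h1, ?_⟩
      rw [← he, List.getElem_zip, List.getElem_tail]
    · rintro ⟨i, h1, he⟩
      refine ⟨i, by rw [List.length_zip, List.length_tail]; omega, ?_⟩
      rw [List.getElem_zip, List.getElem_tail, he]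
  have hBsub : B ⊆ M := fun e he => hinM e (List.mem_toFinset.1 he)
  have hAnotM : ∀ e ∈ A, e ∉ M := fun e he => (hnotM e (List.mem_toFinset.1 he)).1
  have hs'notA : (s', v') ∉ A := by
    intro h
    rcases (hmemA _).1 h with ⟨i, h1, h2, he⟩
    apply hs'P
    have : s' = as[i] := congrArg Prod.fst he
    rw [this]
    exact List.getElem_mem h1
  have hs'notB : (s', v') ∉ B := by
    intro h
    rcases (hmemB _).1 h with ⟨i, h1, he⟩
    apply hs'P
    have : s' = as[i+1] := congrArg Prod.fst he
    rw [this]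
    exact List.getElem_mem h1
  have hCsub : C ⊆ M := by
    rw [hC_def]
    intro e he
    rcases Finset.mem_insert.1 he with h | h
    · rw [h]; exact hs'v'
    · exact hBsub h
  have hsymm : symmDiffM I M (A ∪ B) \ {(s', v')} = (M \ C) ∪ A := by
    ext e
    have h1 : e ∈ A → e ∉ M := hAnotM e
    have h2 : e ∈ B → e ∈ M := fun h => hBsub h
    have h3 : e = (s', v') → e ∈ M := fun h => h ▸ hs'v'
    have h4 : e = (s', v') → e ∉ A := fun h => h ▸ hs'notA
    have h5 : e = (s', v') → e ∉ B := fun h => h ▸ hs'notB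
    simp only [symmDiffM, hC_def, Finset.mem_sdiff, Finset.mem_union,
      Finset.mem_singleton, Finset.mem_insert]
    constructor
    · rintro ⟨h6 | h6, hne⟩
      · exact Or.inl ⟨h6.1, fun hc => hc.elim (fun hh => hne hh) (fun hb => h6.2 (Or.inr hb))⟩
      · rcases h6.1 with ha | hb
        · exact Or.inr ha
        · exact absurd (h2 hb) h6.2
    · rintro (⟨hm, hnc⟩ | ha)
      · refine ⟨Or.inl ⟨hm, ?_⟩, fun hh => hnc (Or.inl hh)⟩
        rintro (hA | hB)
        · exact h1 hA hm
        · exact hnc (Or.inr hB)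
      · exact ⟨Or.inr ⟨Or.inl ha, h1 ha⟩, fun hh => h4 hh ha⟩
  rw [hsymm]
  have hnodupA : (as.zip vs).Nodup :=
    List.Nodup.of_map Prod.fst (by rw [List.map_fst_zip (l₁ := as) (l₂ := vs) (le_of_eq hlen)]; exact hnS)
  have hnodupB : (as.tail.zip vs).Nodup :=
    List.Nodup.of_map Prod.fst (by
      rw [List.map_fst_zip (l₁ := as.tail) (l₂ := vs) (by rw [List.length_tail]; omega)]
      exact hnS.tail)
  have hcardA : A.card = as.length := by
    rw [hA_def, List.toFinset_card_of_nodup hnodupA, List.length_zip]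
    omega
  have hcardB : B.card = as.length - 1 := by
    rw [hB_def, List.toFinset_card_of_nodup hnodupB, List.length_zip, List.length_tail]
    omega
  have hcardC : C.card = as.length := by
    rw [hC_def, Finset.card_insert_of_notMem hs'notB, hcardB]
    omega
  have hdisjA : Disjoint (M \ C) A := by
    rw [Finset.disjoint_right]
    intro e he hin
    exact hAnotM e he (Finset.mem_sdiff.1 hin).1
  have hcard : ((M \ C) ∪ A).card = M.card := by
    rw [Finset.card_union_of_disjoint hdisjA, Finset.card_sdiff_of_subset hCsub, hcardA, hcardC]
    have := Finset.card_le_card hCsub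
    omega
  have hMC_fst : ∀ e ∈ M \ C, e.1 ∉ as := by
    intro e he hmem
    obtain ⟨heM, heC⟩ := Finset.mem_sdiff.1 he
    obtain ⟨i, hi, hei⟩ := List.mem_iff_getElem.1 hmem
    rcases i with _ | j
    · have he1 : e.1 = s := hei.symm.trans hs0
      exact hs (Finset.mem_image.2 ⟨e, heM, he1⟩)
    · have hj : j + 1 < as.length := hi
      have hBmem : (as[j+1]'hj, vs[j]'(by omega)) ∈ B := (hmemB _).2 ⟨j, hj, rfl⟩
      have hMmem : (as[j+1]'hj, vs[j]'(by omega)) ∈ M := hBsub hBmem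
      have heq : e = (as[j+1]'hj, vs[j]'(by omega)) := hMfst e heM _ hMmem hei.symm
      exact heC (by rw [heq]; exact Finset.mem_insert_of_mem hBmem)
  have hMC_snd : ∀ e ∈ M \ C, ∀ i, ∀ h : i < vs.length, e.2 ≠ vs[i] := by
    intro e he i hi hei
    obtain ⟨heM, heC⟩ := Finset.mem_sdiff.1 he
    by_cases hil : i = vs.length - 1
    · subst hil
      exact hv e heM (hei.trans hvlast)
    · have hj : i + 1 < as.length := by omega
      have hBmem : (as[i+1]'hj, vs[i]'hi) ∈ B := (hmemB _).2 ⟨i, hj, rfl⟩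
      have hMmem : (as[i+1]'hj, vs[i]'hi) ∈ M := hBsub hBmem
      have heq : e = (as[i+1]'hj, vs[i]'hi) := hMsnd e heM _ hMmem hei
      exact heC (by rw [heq]; exact Finset.mem_insert_of_mem hBmem)
  have hmatch : IsMatching I ((M \ C) ∪ A) := by
    refine ⟨?_, ?_, ?_⟩
    · intro e he
      rcases Finset.mem_union.1 he with h | h
      · exact hMval e (Finset.mem_sdiff.1 h).1
      · exact (hnotM e (List.mem_toFinset.1 (hA_def ▸ h))).2
    · intro e he e' he' hfst
      rcases Finset.mem_union.1 he with h1 | h1 <;> rcases Finset.mem_union.1 he' with h2 | h2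
      · exact hMfst e (Finset.mem_sdiff.1 h1).1 e' (Finset.mem_sdiff.1 h2).1 hfst
      · exfalso
        rcases (hmemA _).1 h2 with ⟨i, hi1, hi2, hee⟩
        refine hMC_fst e h1 ?_
        rw [hfst, hee]
        exact List.getElem_mem hi1
      · exfalso
        rcases (hmemA _).1 h1 with ⟨i, hi1, hi2, hee⟩
        refine hMC_fst e' h2 ?_
        rw [← hfst, hee]
        exact List.getElem_mem hi1
      · rcases (hmemA _).1 h1 with ⟨i, hi1, hi2, hee⟩
        rcases (hmemA _).1 h2 with ⟨j, hj1, hj2, hee'⟩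
        have heqf : as[i] = as[j] := by
          have := hfst
          rw [hee, hee'] at this
          exact this
        have hij : i = j := (hnS.getElem_inj_iff).1 heqf
        subst hij
        rw [hee, hee']
    · intro e he e' he' hsnd
      rcases Finset.mem_union.1 he with h1 | h1 <;> rcases Finset.mem_union.1 he' with h2 | h2
      · exact hMsnd e (Finset.mem_sdiff.1 h1).1 e' (Finset.mem_sdiff.1 h2).1 hsnd
      · exfalso
        rcases (hmemA _).1 h2 with ⟨i, hi1, hi2, hee⟩
        refine hMC_snd e h1 i hi2 ?_
        rw [hsnd, hee]
      · exfalso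
        rcases (hmemA _).1 h1 with ⟨i, hi1, hi2, hee⟩
        refine hMC_snd e' h2 i hi2 ?_
        rw [← hsnd, hee]
      · rcases (hmemA _).1 h1 with ⟨i, hi1, hi2, hee⟩
        rcases (hmemA _).1 h2 with ⟨j, hj1, hj2, hee'⟩
        have heqs : vs[i] = vs[j] := by
          have := hsnd
          rw [hee, hee'] at this
          exact this
        have hij : i = j := (hnV.getElem_inj_iff).1 heqs
        subst hij
        rw [hee, hee']
  have hzipB : as.tail.zip vs = as.tail.zip vs.dropLast := by
    have h1 : vs.dropLast ++ [vs.getLast hvne] = vs := List.dropLast_append_getLast hvne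
    have h2 : as.tail.length = vs.dropLast.length := by
      rw [List.length_tail, List.length_dropLast]
      omega
    calc as.tail.zip vs = (as.tail ++ []).zip (vs.dropLast ++ [vs.getLast hvne]) := by
          rw [List.append_nil, h1]
      _ = as.tail.zip vs.dropLast ++ ([] : List I.S).zip [vs.getLast hvne] :=
          List.zip_append h2
      _ = as.tail.zip vs.dropLast := by simp
  have hsig : ∀ i, sig I ((M \ C) ∪ A) i = sig I M i := by
    intro i
    have hsplitM : M = (M \ C) ∪ C := (Finset.sdiff_union_of_subset hCsub).symm
    have hd2 : Disjoint (M \ C) C := Finset.sdiff_disjoint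
    unfold sig
    rw [Finset.filter_union,
      Finset.card_union_of_disjoint (Finset.disjoint_filter_filter hdisjA)]
    conv_rhs => rw [hsplitM]
    rw [Finset.filter_union,
      Finset.card_union_of_disjoint (Finset.disjoint_filter_filter hd2)]
    congr 1
    have hAcount : (A.filter (fun e => seatRank I e.2 = i)).card
        = vs.countP (fun u => decide (seatRank I u = i)) := by
      rw [hA_def, card_filter_toFinset' _ hnodupA]
      conv_rhs => rw [← List.map_snd_zip (l₁ := as) (l₂ := vs) (le_of_eq hlen.symm)]
      rw [List.countP_map]
      rfl
    have hBcount : (B.filter (fun e => seatRank I e.2 = i)).card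
        = vs.dropLast.countP (fun u => decide (seatRank I u = i)) := by
      rw [hB_def, card_filter_toFinset' _ hnodupB, hzipB]
      conv_rhs => rw [← List.map_snd_zip (l₁ := as.tail) (l₂ := vs.dropLast)
        (by rw [List.length_tail, List.length_dropLast]; omega)]
      rw [List.countP_map]
      rfl
    have hglv : vs.getLast hvne = v := by
      rw [List.getLast_eq_getElem]
      exact hvlast
    have hvsplit : vs.countP (fun u => decide (seatRank I u = i))
        = vs.dropLast.countP (fun u => decide (seatRank I u = i))
          + (if seatRank I v = i then 1 else 0) := by
      conv_lhs => rw [← List.dropLast_append_getLast hvne]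
      rw [List.countP_append, hglv]
      congr 1
      by_cases h : seatRank I v = i
      · simp [h]
      · simp [h]
    have hCcount : (C.filter (fun e => seatRank I e.2 = i)).card
        = vs.dropLast.countP (fun u => decide (seatRank I u = i))
          + (if seatRank I v' = i then 1 else 0) := by
      rw [hC_def, Finset.filter_insert]
      split_ifs with h
      · rw [Finset.card_insert_of_notMem (fun hc => hs'notB (Finset.mem_filter.1 hc).1),
          hBcount]
      · rw [hBcount]
        omega
    rw [hAcount, hCcount, hvsplit, hrk, hrk']
  have himgA : A.image Prod.fst = as.toFinset := by
    rw [hA_def]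
    conv_rhs => rw [← List.map_fst_zip (l₁ := as) (l₂ := vs) (le_of_eq hlen)]
    ext a
    simp
  have himgB : B.image Prod.fst = as.tail.toFinset := by
    rw [hB_def]
    conv_rhs => rw [← List.map_fst_zip (l₁ := as.tail) (l₂ := vs) (by rw [List.length_tail]; omega)]
    ext a
    simp
  have hcov : covered I ((M \ C) ∪ A) = insert s (covered I M) \ {s'} := by
    have hX : ∀ a, a ∈ (M \ C).image Prod.fst → a ≠ s' := by
      intro a ha hee
      rcases Finset.mem_image.1 ha with ⟨e, he, hfst⟩
      obtain ⟨heM, heC⟩ := Finset.mem_sdiff.1 he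
      have heq : e = (s', v') := hMfst e heM (s', v') hs'v' (by rw [hfst, hee])
      exact heC (by rw [heq, hC_def]; exact Finset.mem_insert_self _ _)
    have hss' : s ≠ s' := fun h => hs (h ▸ hs'cov)
    have hcons : s :: as.tail = as := by
      rw [hsv]
      exact List.cons_head_tail hPne
    have hcovM : covered I M = ((M \ C).image Prod.fst) ∪ insert s' (as.tail.toFinset) := by
      have h1 : covered I M = ((M \ C) ∪ C).image Prod.fst := by
        rw [Finset.sdiff_union_of_subset hCsub]
        rfl
      rw [h1, Finset.image_union, hC_def, Finset.image_insert, himgB]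
    have hcovL : covered I ((M \ C) ∪ A) = ((M \ C).image Prod.fst) ∪ as.toFinset := by
      unfold covered
      rw [Finset.image_union, himgA]
    have h2 : as.toFinset = insert s as.tail.toFinset := by
      conv_lhs => rw [← hcons]
      rw [List.toFinset_cons]
    rw [hcovL, hcovM, h2]
    ext a
    have hX' := hX a
    have hT' : a ∈ as.tail.toFinset → a ≠ s' := fun h hh =>
      hs'P (hh ▸ List.mem_of_mem_tail (List.mem_toFinset.1 h))
    simp only [Finset.mem_union, Finset.mem_insert, Finset.mem_sdiff, Finset.mem_singleton]
    constructor
    · rintro (hXa | hsa | hta)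
      · exact ⟨Or.inr (Or.inl hXa), hX' hXa⟩
      · exact ⟨Or.inl hsa, fun hh => hss' (hsa ▸ hh)⟩
      · exact ⟨Or.inr (Or.inr (Or.inr hta)), hT' hta⟩
    · rintro ⟨hsa | hXa | hs'a | hta, hne⟩
      · exact Or.inr (Or.inl hsa)
      · exact Or.inl hXa
      · exact absurd hs'a hne
      · exact Or.inr (Or.inr hta)
  refine ⟨hmatch, hcard, hsig, hcov, ?_⟩
  rintro ⟨-, hq, hopt⟩
  refine ⟨hmatch, by rw [hcard]; exact hq, ?_⟩
  intro M' hM' hq' hslt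
  apply hopt M' hM' hq'
  obtain ⟨k', h1, h2, h3, h4⟩ := hslt
  exact ⟨k', h1, h2, fun j hj1 hj2 => (hsig j).symm.trans (h3 j hj1 hj2), hsig k' ▸ h4⟩
end
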